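/- arXiv:2005.06304 — 2 statements merged into one kernel-verified Lean document; each statement's English description precedes it below -/
import Mathlib

section
/- Let Q be a quantaloid and let L ⊣ R be an adjunction between Q-categories D and E (L : D → E, R : E → D). Then a Q-category X is equivalent to Fix(RL) if and only if there exist essentially surjective Q-functors F : D → X and G : E → X such that E(LA, B) = X(FA, GB) for all A ∈ D₀ and B ∈ E₀. -/
universe u

/-- A quantaloid: a category whose hom-sets are complete lattices and whose
composition preserves arbitrary joins in each variable. -/
structure Quantaloid : Type (u + 1) where
  Obj : Type u
  Hom : Obj → Obj → Type u
  [lat : ∀ S T : Obj, CompleteLattice (Hom S T)]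
  comp : ∀ {S T U : Obj}, Hom T U → Hom S T → Hom S U
  one : ∀ S : Obj, Hom S S
  comp_assoc : ∀ {S T U V : Obj} (w : Hom U V) (v : Hom T U) (u : Hom S T),
      comp (comp w v) u = comp w (comp v u)
  comp_one : ∀ {S T : Obj} (u : Hom S T), comp u (one S) = u
  one_comp : ∀ {S T : Obj} (u : Hom S T), comp (one T) u = u
  comp_sSup : ∀ {S T U : Obj} (v : Hom T U) (s : Set (Hom S T)),
      comp v (sSup s) = ⨆ u ∈ s, comp v u
  sSup_comp : ∀ {S T U : Obj} (s : Set (Hom T U)) (u : Hom S T),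
      comp (sSup s) u = ⨆ v ∈ s, comp v u

attribute [instance] Quantaloid.lat

namespace Quantaloid

variable (Q : Quantaloid.{u})

/-- The left implication `w ↙ u`, characterized by `v ∘ u ≤ w ↔ v ≤ w ↙ u`. -/
def lda {S T U : Q.Obj} (w : Q.Hom S U) (u : Q.Hom S T) : Q.Hom T U :=
  sSup {v | Q.comp v u ≤ w}

/-- The right implication `v ↘ w`, characterized by `v ∘ u ≤ w ↔ u ≤ v ↘ w`. -/
def rda {S T U : Q.Obj} (v : Q.Hom T U) (w : Q.Hom S U) : Q.Hom S T :=
  sSup {u | Q.comp v u ≤ w}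

/-- Transport of a `Q`-arrow along equalities of objects. -/
def cast {S S' T T' : Q.Obj} (hS : S = S') (hT : T = T') (u : Q.Hom S T) : Q.Hom S' T' :=
  hS ▸ hT ▸ u

variable {Q}

theorem comp_mono_left {S T U : Q.Obj} {v v' : Q.Hom T U} (h : v ≤ v') (u : Q.Hom S T) :
    Q.comp v u ≤ Q.comp v' u := by
  have h1 : sSup ({v, v'} : Set (Q.Hom T U)) = v' := by
    rw [sSup_pair]; exact sup_eq_right.mpr h
  calc Q.comp v u ≤ ⨆ x ∈ ({v, v'} : Set (Q.Hom T U)), Q.comp x u :=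
        le_iSup₂ (f := fun x _ => Q.comp x u) v (by simp)
    _ = Q.comp (sSup ({v, v'} : Set (Q.Hom T U))) u := (Q.sSup_comp _ _).symm
    _ = Q.comp v' u := by rw [h1]

theorem comp_mono_right {S T U : Q.Obj} (v : Q.Hom T U) {u u' : Q.Hom S T} (h : u ≤ u') :
    Q.comp v u ≤ Q.comp v u' := by
  have h1 : sSup ({u, u'} : Set (Q.Hom S T)) = u' := by
    rw [sSup_pair]; exact sup_eq_right.mpr h
  calc Q.comp v u ≤ ⨆ x ∈ ({u, u'} : Set (Q.Hom S T)), Q.comp v x :=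
        le_iSup₂ (f := fun x _ => Q.comp v x) u (by simp)
    _ = Q.comp v (sSup ({u, u'} : Set (Q.Hom S T))) := (Q.comp_sSup _ _).symm
    _ = Q.comp v u' := by rw [h1]

theorem comp_lda_le {S T U : Q.Obj} (w : Q.Hom S U) (u : Q.Hom S T) :
    Q.comp (Q.lda w u) u ≤ w := by
  rw [lda, Q.sSup_comp]
  exact iSup₂_le fun v hv => hv

theorem comp_rda_le {S T U : Q.Obj} (v : Q.Hom T U) (w : Q.Hom S U) :
    Q.comp v (Q.rda v w) ≤ w := by
  rw [rda, Q.comp_sSup]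
  exact iSup₂_le fun u hu => hu

theorem le_lda {S T U : Q.Obj} {u : Q.Hom S T} {v : Q.Hom T U} {w : Q.Hom S U} :
    Q.comp v u ≤ w ↔ v ≤ Q.lda w u :=
  ⟨fun h => le_sSup h, fun h => le_trans (comp_mono_left h u) (comp_lda_le w u)⟩

theorem le_rda {S T U : Q.Obj} {u : Q.Hom S T} {v : Q.Hom T U} {w : Q.Hom S U} :
    Q.comp v u ≤ w ↔ u ≤ Q.rda v w :=
  ⟨fun h => le_sSup h, fun h => le_trans (comp_mono_right v h) (comp_rda_le v w)⟩

theorem cast_cast {S S' S'' T T' T'' : Q.Obj} (h1 : S = S') (h2 : T = T')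
    (h3 : S' = S'') (h4 : T' = T'') (u : Q.Hom S T) :
    Q.cast h3 h4 (Q.cast h1 h2 u) = Q.cast (h1.trans h3) (h2.trans h4) u := by
  subst h1; subst h2; subst h3; subst h4; rfl

theorem cast_mono {S S' T T' : Q.Obj} (hS : S = S') (hT : T = T') {u v : Q.Hom S T}
    (h : u ≤ v) : Q.cast hS hT u ≤ Q.cast hS hT v := by
  subst hS; subst hT; exact h

end Quantaloid
/-! ## Quantaloid-enriched categories -/

/-- A `Q`-category: a class of objects with extents and hom-arrows in `Q`. -/
structure QCat (Q : Quantaloid.{u}) : Type (u + 1) where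
  Obj : Type u
  ext : Obj → Q.Obj
  hom : ∀ X Y : Obj, Q.Hom (ext X) (ext Y)
  one_le : ∀ X, Q.one (ext X) ≤ hom X X
  comp_le : ∀ X Y Z, Q.comp (hom Y Z) (hom X Y) ≤ hom X Z

/-- A `Q`-relation between (the object classes of) two `Q`-categories. -/
abbrev QRel (Q : Quantaloid.{u}) (D E : QCat Q) : Type u :=
  ∀ (X : D.Obj) (Y : E.Obj), Q.Hom (D.ext X) (E.ext Y)

/-- The hom `Q`-relation of a `Q`-category. -/
def QCat.homRel {Q : Quantaloid.{u}} (E : QCat Q) : QRel Q E E := fun X Y => E.hom X Y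

/-- Composition of `Q`-relations. -/
def QRel.comp {Q : Quantaloid.{u}} {C D E : QCat Q} (Ψ : QRel Q D E) (Φ : QRel Q C D) :
    QRel Q C E :=
  fun X Z => ⨆ Y : D.Obj, Q.comp (Ψ Y Z) (Φ X Y)

/-- Left implication of `Q`-relations: `(Ξ ↙ Φ)(Y,Z) = ⋀_X Ξ(X,Z) ↙ Φ(X,Y)`. -/
def QRel.lda {Q : Quantaloid.{u}} {C D E : QCat Q} (Ξ : QRel Q C E) (Φ : QRel Q C D) :
    QRel Q D E :=
  fun Y Z => ⨅ X : C.Obj, Q.lda (Ξ X Z) (Φ X Y)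

/-- Right implication of `Q`-relations: `(Ψ ↘ Ξ)(X,Y) = ⋀_Z Ψ(Y,Z) ↘ Ξ(X,Z)`. -/
def QRel.rda {Q : Quantaloid.{u}} {C D E : QCat Q} (Ψ : QRel Q D E) (Ξ : QRel Q C E) :
    QRel Q C D :=
  fun X Y => ⨅ Z : E.Obj, Q.rda (Ψ Y Z) (Ξ X Z)

/-- A `Q`-relation between `Q`-categories is a `Q`-distributor if `E ∘ Φ ∘ D ≤ Φ`. -/
def IsDist {Q : Quantaloid.{u}} {D E : QCat Q} (Φ : QRel Q D E) : Prop :=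
  QRel.comp E.homRel (QRel.comp Φ D.homRel) ≤ Φ

/-- The one-object `Q`-category on an object `T` of `Q`, with hom `1_T`. -/
def singleQCat (Q : Quantaloid.{u}) (T : Q.Obj) : QCat Q where
  Obj := PUnit
  ext _ := T
  hom _ _ := Q.one T
  one_le _ := le_rfl
  comp_le _ _ _ := le_of_eq (Q.comp_one _)

/-- A sink of extent `T` on a `Q`-category `E`: a `Q`-relation `E₀ ⇸ {T}`. -/
abbrev Sink {Q : Quantaloid.{u}} (E : QCat Q) (T : Q.Obj) : Type u :=
  QRel Q E (singleQCat Q T)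

/-- A source of extent `T` on a `Q`-category `E`: a `Q`-relation `{T} ⇸ E₀`. -/
abbrev Source {Q : Quantaloid.{u}} (E : QCat Q) (T : Q.Obj) : Type u :=
  QRel Q (singleQCat Q T) E

/-- `Y` is the supremum of the sink `σ`: `Y` has extent `T` and `E(Y,−) = E ↙ σ`. -/
structure IsSup {Q : Quantaloid.{u}} (E : QCat Q) {T : Q.Obj} (σ : Sink E T) (Y : E.Obj) :
    Prop where
  ext : E.ext Y = T
  hom : ∀ Z : E.Obj, Q.cast ext rfl (E.hom Y Z) = QRel.lda E.homRel σ PUnit.unit Z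

/-- `Y` is the infimum of the source `τ`: `Y` has extent `T` and `E(−,Y) = τ ↘ E`. -/
structure IsInf {Q : Quantaloid.{u}} (E : QCat Q) {T : Q.Obj} (τ : Source E T) (Y : E.Obj) :
    Prop where
  ext : E.ext Y = T
  hom : ∀ Z : E.Obj, Q.cast rfl ext (E.hom Z Y) = QRel.rda τ E.homRel Z PUnit.unit

/-- A `Q`-category is total if every sink on it has a supremum. -/
def QCat.Total {Q : Quantaloid.{u}} (E : QCat Q) : Prop :=
  ∀ (T : Q.Obj) (σ : Sink E T), ∃ Y : E.Obj, IsSup E σ Y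

/-- A `Q`-functor between `Q`-categories. -/
structure QFun {Q : Quantaloid.{u}} (D E : QCat Q) : Type u where
  obj : D.Obj → E.Obj
  ext : ∀ X, E.ext (obj X) = D.ext X
  hom_le : ∀ X Y, D.hom X Y ≤ Q.cast (ext X) (ext Y) (E.hom (obj X) (obj Y))

/-- The graph `F_♮(X,Y) = E(FX,Y)` of a `Q`-functor. -/
def QFun.graph {Q : Quantaloid.{u}} {D E : QCat Q} (F : QFun D E) : QRel Q D E :=
  fun X Y => Q.cast (F.ext X) rfl (E.hom (F.obj X) Y)

/-- The cograph `F^♮(Y,X) = E(Y,FX)` of a `Q`-functor. -/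
def QFun.cograph {Q : Quantaloid.{u}} {D E : QCat Q} (F : QFun D E) : QRel Q E D :=
  fun Y X => Q.cast rfl (F.ext X) (E.hom Y (F.obj X))

/-- `Y` is the colimit of `F` weighted by the sink `σ`: `E(Y,−) = F_♮ ↙ σ`. -/
structure IsColim {Q : Quantaloid.{u}} {D E : QCat Q} (F : QFun D E) {T : Q.Obj}
    (σ : Sink D T) (Y : E.Obj) : Prop where
  ext : E.ext Y = T
  hom : ∀ Z : E.Obj, Q.cast ext rfl (E.hom Y Z) = QRel.lda F.graph σ PUnit.unit Z

/-- `Y` is the limit of `F` weighted by the source `τ`: `E(−,Y) = τ ↘ F^♮`. -/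
structure IsLim {Q : Quantaloid.{u}} {D E : QCat Q} (F : QFun D E) {T : Q.Obj}
    (τ : Source D T) (Y : E.Obj) : Prop where
  ext : E.ext Y = T
  hom : ∀ Z : E.Obj, Q.cast rfl ext (E.hom Z Y) = QRel.rda τ F.cograph Z PUnit.unit

/-- A `Q`-functor is dense if every object of its codomain is a weighted colimit of it. -/
def QFun.Dense {Q : Quantaloid.{u}} {D E : QCat Q} (F : QFun D E) : Prop :=
  ∀ Y : E.Obj, ∃ (T : Q.Obj) (σ : Sink D T), IsColim F σ Y

/-- A `Q`-functor is codense if every object of its codomain is a weighted limit of it. -/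
def QFun.Codense {Q : Quantaloid.{u}} {D E : QCat Q} (F : QFun D E) : Prop :=
  ∀ Y : E.Obj, ∃ (T : Q.Obj) (τ : Source D T), IsLim F τ Y

/-- The underlying (pre)order of a `Q`-category: `X ≤ Y` iff `|X| = |Y|` and
`1_{|X|} ≤ E(X,Y)`. -/
def QCat.le {Q : Quantaloid.{u}} (E : QCat Q) (X Y : E.Obj) : Prop :=
  ∃ h : E.ext X = E.ext Y, Q.cast rfl h (Q.one (E.ext X)) ≤ E.hom X Y

/-- `X ≅ Y` in the underlying order of a `Q`-category. -/
def QCat.iso {Q : Quantaloid.{u}} (E : QCat Q) (X Y : E.Obj) : Prop :=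
  E.le X Y ∧ E.le Y X

/-- A `Q`-category is separated if isomorphic objects are equal. -/
def QCat.Separated {Q : Quantaloid.{u}} (E : QCat Q) : Prop :=
  ∀ X Y : E.Obj, E.iso X Y → X = Y

/-- The identity `Q`-functor. -/
def QFun.id {Q : Quantaloid.{u}} (E : QCat Q) : QFun E E where
  obj X := X
  ext _ := rfl
  hom_le _ _ := le_rfl

/-- Composition of `Q`-functors. -/
def QFun.comp {Q : Quantaloid.{u}} {C D E : QCat Q} (G : QFun D E) (F : QFun C D) :
    QFun C E where
  obj X := G.obj (F.obj X)
  ext X := (G.ext (F.obj X)).trans (F.ext X)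
  hom_le X Y := by
    refine le_trans (F.hom_le X Y) ?_
    refine le_trans (Quantaloid.cast_mono (F.ext X) (F.ext Y)
      (G.hom_le (F.obj X) (F.obj Y))) ?_
    rw [Quantaloid.cast_cast]

/-- The full `Q`-subcategory of `E` on the objects satisfying `P`. -/
def QCat.full {Q : Quantaloid.{u}} (E : QCat Q) (P : E.Obj → Prop) : QCat Q where
  Obj := {X : E.Obj // P X}
  ext X := E.ext X.1
  hom X Y := E.hom X.1 Y.1
  one_le X := E.one_le X.1
  comp_le X Y Z := E.comp_le X.1 Y.1 Z.1

/-- The inclusion `Q`-functor of a full `Q`-subcategory. -/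
def QCat.incl {Q : Quantaloid.{u}} (E : QCat Q) (P : E.Obj → Prop) :
    QFun (E.full P) E where
  obj X := X.1
  ext _ := rfl
  hom_le _ _ := le_rfl

/-- The full `Q`-subcategory of fixed points of an endo-`Q`-functor. -/
def QCat.fix {Q : Quantaloid.{u}} (E : QCat Q) (F : QFun E E) : QCat Q :=
  E.full (fun X => E.iso (F.obj X) X)

/-- Adjoint `Q`-functors: `L ⊣ R` iff `E(LX,Y) = D(X,RY)`. -/
def QAdj {Q : Quantaloid.{u}} {D E : QCat Q} (L : QFun D E) (R : QFun E D) : Prop :=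
  ∀ (X : D.Obj) (Y : E.Obj), L.graph X Y = Q.cast rfl (R.ext Y) (D.hom X (R.obj Y))

/-- An essentially surjective `Q`-functor. -/
def QFun.EssSurj {Q : Quantaloid.{u}} {D E : QCat Q} (F : QFun D E) : Prop :=
  ∀ Y : E.Obj, ∃ X : D.Obj, E.iso Y (F.obj X)

/-- Equivalence of `Q`-categories. -/
def QEquiv {Q : Quantaloid.{u}} (D E : QCat Q) : Prop :=
  ∃ (F : QFun D E) (G : QFun E D),
    (∀ X, D.iso (G.obj (F.obj X)) X) ∧ (∀ Y, E.iso (F.obj (G.obj Y)) Y)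

/-- Isomorphism of `Q`-categories. -/
def QIso {Q : Quantaloid.{u}} (D E : QCat Q) : Prop :=
  ∃ (F : QFun D E) (G : QFun E D),
    (∀ X, G.obj (F.obj X) = X) ∧ (∀ Y, F.obj (G.obj Y) = Y)

/-- Tensor: `Y = f ⊗ X` iff `E(Y,−) = E(X,−) ↙ f`. -/
structure IsTensor {Q : Quantaloid.{u}} (E : QCat Q) {T : Q.Obj} (X : E.Obj)
    (f : Q.Hom (E.ext X) T) (Y : E.Obj) : Prop where
  ext : E.ext Y = T
  hom : ∀ Z : E.Obj, Q.cast ext rfl (E.hom Y Z) = Q.lda (E.hom X Z) f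

/-- Cotensor: `Y = g ⤳ X` iff `E(−,Y) = g ↘ E(−,X)`. -/
structure IsCotensor {Q : Quantaloid.{u}} (E : QCat Q) {T : Q.Obj} (X : E.Obj)
    (g : Q.Hom T (E.ext X)) (Y : E.Obj) : Prop where
  ext : E.ext Y = T
  hom : ∀ Z : E.Obj, Q.cast rfl ext (E.hom Z Y) = Q.rda g (E.hom Z X)
/-! ## The Isbell adjunction and its fixed points -/

section MCat

variable {Q : Quantaloid.{u}} {D E : QCat Q}

/-- The Isbell upper map of a `Q`-distributor `Φ : D ⇸ E` on (pre)sheaves: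
`Φ↑σ = Φ ↙ σ`. -/
def isbellUp (Φ : QRel Q D E) {T : Q.Obj} (σ : Sink D T) : Source E T :=
  QRel.lda Φ σ

/-- The Isbell lower map of a `Q`-distributor `Φ : D ⇸ E` on (co)presheaves:
`Φ↓τ = τ ↘ Φ`. -/
def isbellDown (Φ : QRel Q D E) {T : Q.Obj} (τ : Source E T) : Sink D T :=
  QRel.rda τ Φ

/-- `MΦ = Fix(Φ↓Φ↑)`: the full `Q`-subcategory of the presheaf `Q`-category of `D`
consisting of the presheaves fixed by the Isbell adjunction induced by `Φ`. -/
def MCat (Φ : QRel Q D E) : QCat Q where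
  Obj := Σ T : Q.Obj, {σ : Sink D T // IsDist σ ∧ isbellDown Φ (isbellUp Φ σ) = σ}
  ext p := p.1
  hom p q := QRel.lda q.2.1 p.2.1 PUnit.unit PUnit.unit
  one_le p := by
    refine le_iInf fun X => Quantaloid.le_lda.mp ?_
    exact le_of_eq (Q.one_comp _)
  comp_le p q r := by
    refine le_iInf fun X => Quantaloid.le_lda.mp ?_
    refine le_trans (le_of_eq (Q.comp_assoc _ _ _)) ?_
    have h1 : Q.comp (QRel.lda q.2.1 p.2.1 PUnit.unit PUnit.unit) (p.2.1 X PUnit.unit) ≤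
        q.2.1 X PUnit.unit := by
      refine le_trans (Quantaloid.comp_mono_left (iInf_le _ X) _) ?_
      exact Quantaloid.comp_lda_le _ _
    refine le_trans (Quantaloid.comp_mono_right _ h1) ?_
    refine le_trans (Quantaloid.comp_mono_left (iInf_le _ X) _) ?_
    exact Quantaloid.comp_lda_le _ _

end MCat
/-! ## Concrete categories over a base category -/

open CategoryTheory

/-- Transport of a morphism of `B` along equalities of objects. -/
def hcast {B : Type u} [Category.{u} B] {S S' T T' : B} (hS : S = S') (hT : T = T')
    (f : S ⟶ T) : S' ⟶ T' :=
  hS ▸ hT ▸ f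

/-- Transport of a set of morphisms of `B` along equalities of objects. -/
def scast {B : Type u} [Category.{u} B] {S S' T T' : B} (hS : S = S') (hT : T = T')
    (s : Set (S ⟶ T)) : Set (S' ⟶ T') :=
  hcast hS hT '' s

theorem hcast_hcast {B : Type u} [Category.{u} B] {S S' S'' T T' T'' : B}
    (h1 : S = S') (h2 : T = T') (h3 : S' = S'') (h4 : T' = T'') (f : S ⟶ T) :
    hcast h3 h4 (hcast h1 h2 f) = hcast (h1.trans h3) (h2.trans h4) f := by
  subst h1; subst h2; subst h3; subst h4; rfl

/-- A concrete category over a base category `B`, described by its objects, extents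
and hom-sets of `B`-morphisms. -/
structure ConcCat (B : Type u) [Category.{u} B] : Type (u + 1) where
  Obj : Type u
  ext : Obj → B
  hom : ∀ X Y : Obj, Set (ext X ⟶ ext Y)
  id_mem : ∀ X, 𝟙 (ext X) ∈ hom X X
  comp_mem : ∀ {X Y Z : Obj} {f : ext X ⟶ ext Y} {g : ext Y ⟶ ext Z},
      f ∈ hom X Y → g ∈ hom Y Z → f ≫ g ∈ hom X Z

variable {B : Type u} [Category.{u} B]

/-- A concrete functor over `B`. -/
structure ConcFun (D E : ConcCat B) : Type u where
  obj : D.Obj → E.Obj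
  ext : ∀ X, E.ext (obj X) = D.ext X
  mem : ∀ {X Y : D.Obj} {f : D.ext X ⟶ D.ext Y}, f ∈ D.hom X Y →
      hcast (ext X).symm (ext Y).symm f ∈ E.hom (obj X) (obj Y)

/-- The underlying (pre)order of a concrete category: `X ≤ Y` iff `|X| = |Y|` and
`1_{|X|} ∈ E(X,Y)`. -/
def ConcCat.le (E : ConcCat B) (X Y : E.Obj) : Prop :=
  ∃ h : E.ext X = E.ext Y, hcast rfl h (𝟙 (E.ext X)) ∈ E.hom X Y

/-- `X ≅ Y` in the underlying order of a concrete category. -/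
def ConcCat.iso (E : ConcCat B) (X Y : E.Obj) : Prop :=
  E.le X Y ∧ E.le Y X

/-- The identity concrete functor. -/
def ConcFun.id (E : ConcCat B) : ConcFun E E where
  obj X := X
  ext _ := rfl
  mem hf := hf

/-- Composition of concrete functors. -/
def ConcFun.comp {C D E : ConcCat B} (G : ConcFun D E) (F : ConcFun C D) :
    ConcFun C E where
  obj X := G.obj (F.obj X)
  ext X := (G.ext (F.obj X)).trans (F.ext X)
  mem {X Y f} hf := by
    have h := G.mem (F.mem hf)
    rw [hcast_hcast] at h
    exact h

/-- The full concrete subcategory on the objects satisfying `P`. -/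
def ConcCat.full (E : ConcCat B) (P : E.Obj → Prop) : ConcCat B where
  Obj := {X : E.Obj // P X}
  ext X := E.ext X.1
  hom X Y := E.hom X.1 Y.1
  id_mem X := E.id_mem X.1
  comp_mem hf hg := E.comp_mem hf hg

/-- The inclusion concrete functor of a full subcategory. -/
def ConcCat.incl (E : ConcCat B) (P : E.Obj → Prop) : ConcFun (E.full P) E where
  obj X := X.1
  ext _ := rfl
  mem hf := hf

/-- The full subcategory of fixed points of an endo concrete functor. -/
def ConcCat.fix (E : ConcCat B) (F : ConcFun E E) : ConcCat B :=
  E.full (fun X => E.iso (F.obj X) X)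

/-- A Galois correspondence `(L,R)` between concrete categories:
`E(LX,Y) = D(X,RY)` as subsets of `B(|X|,|Y|)`. -/
def Galois {D E : ConcCat B} (L : ConcFun D E) (R : ConcFun E D) : Prop :=
  ∀ (X : D.Obj) (Y : E.Obj),
    scast (L.ext X) rfl (E.hom (L.obj X) Y) = scast rfl (R.ext Y) (D.hom X (R.obj Y))

/-- An essentially surjective concrete functor. -/
def ConcFun.EssSurj {D E : ConcCat B} (F : ConcFun D E) : Prop :=
  ∀ Y : E.Obj, ∃ X : D.Obj, E.iso Y (F.obj X)

/-- Concrete equivalence of concrete categories. -/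
def ConcEquiv (D E : ConcCat B) : Prop :=
  ∃ (F : ConcFun D E) (G : ConcFun E D),
    (∀ X, D.iso (G.obj (F.obj X)) X) ∧ (∀ Y, E.iso (F.obj (G.obj Y)) Y)

/-- `Y` is an initial lifting of the `E`-structured source `(g_i : T → |X_i|)`. -/
structure IsInitialLifting (E : ConcCat B) {T : B} {ι : Type u} (X : ι → E.Obj)
    (g : ∀ i, T ⟶ E.ext (X i)) (Y : E.Obj) : Prop where
  ext : E.ext Y = T
  mem : ∀ i, hcast ext.symm rfl (g i) ∈ E.hom Y (X i)
  initial : ∀ (Z : E.Obj) (f : E.ext Z ⟶ T),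
      (∀ i, f ≫ g i ∈ E.hom Z (X i)) → hcast rfl ext.symm f ∈ E.hom Z Y

/-- `Y` is a final lifting of the `E`-structured sink `(f_i : |X_i| → T)`. -/
structure IsFinalLifting (E : ConcCat B) {T : B} {ι : Type u} (X : ι → E.Obj)
    (f : ∀ i, E.ext (X i) ⟶ T) (Y : E.Obj) : Prop where
  ext : E.ext Y = T
  mem : ∀ i, hcast rfl ext.symm (f i) ∈ E.hom (X i) Y
  final : ∀ (Z : E.Obj) (g : T ⟶ E.ext Z),
      (∀ i, f i ≫ g ∈ E.hom (X i) Z) → hcast ext.symm rfl g ∈ E.hom Y Z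

/-- A concrete category is topological over `B` if every structured source admits
an initial lifting. -/
def Topological (E : ConcCat B) : Prop :=
  ∀ (T : B) (ι : Type u) (X : ι → E.Obj) (g : ∀ i, T ⟶ E.ext (X i)),
    ∃ Y : E.Obj, IsInitialLifting E X g Y

/-- A concrete functor `F : D → E` is initially dense if every object of `E` is the
domain of an initial source with codomains in the image of `F`. -/
def InitiallyDense {D E : ConcCat B} (F : ConcFun D E) : Prop :=
  ∀ Y : E.Obj, ∃ (ι : Type u) (X : ι → D.Obj) (g : ∀ i, E.ext Y ⟶ E.ext (F.obj (X i))),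
    (∀ i, g i ∈ E.hom Y (F.obj (X i))) ∧
    ∀ (Z : E.Obj) (f : E.ext Z ⟶ E.ext Y),
      (∀ i, f ≫ g i ∈ E.hom Z (F.obj (X i))) → f ∈ E.hom Z Y

/-- A concrete functor `F : D → E` is finally dense if every object of `E` is the
codomain of a final sink with domains in the image of `F`. -/
def FinallyDense {D E : ConcCat B} (F : ConcFun D E) : Prop :=
  ∀ Y : E.Obj, ∃ (ι : Type u) (X : ι → D.Obj) (f : ∀ i, E.ext (F.obj (X i)) ⟶ E.ext Y),
    (∀ i, f i ∈ E.hom (F.obj (X i)) Y) ∧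
    ∀ (Z : E.Obj) (g : E.ext Y ⟶ E.ext Z),
      (∀ i, f i ≫ g ∈ E.hom (F.obj (X i)) Z) → g ∈ E.hom Y Z
/-! ## The free quantaloid and the `QB`-category associated to a concrete category -/

/-- The free quantaloid on a category `B`: hom-lattices are powersets of hom-sets,
with elementwise composition. -/
def freeQuantaloid (B : Type u) [Category.{u} B] : Quantaloid.{u} where
  Obj := B
  Hom S T := Set (S ⟶ T)
  lat _ _ := inferInstance
  comp := fun {S T U} g f => {h | ∃ a ∈ f, ∃ b ∈ g, a ≫ b = h}
  one S := {𝟙 S}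
  comp_assoc := by
    intro S T U V w v u
    ext h
    constructor
    · rintro ⟨a, ha, b, ⟨c, hc, d, hd, rfl⟩, rfl⟩
      exact ⟨a ≫ c, ⟨a, ha, c, hc, rfl⟩, d, hd, by simp⟩
    · rintro ⟨a, ⟨c, hc, e, he, rfl⟩, b, hb, rfl⟩
      exact ⟨c, hc, e ≫ b, ⟨e, he, b, hb, rfl⟩, by simp⟩
  comp_one := by
    intro S T u
    ext h
    simp
  one_comp := by
    intro S T u
    ext h
    simp
  comp_sSup := by
    intro S T U v s
    ext h
    simp only [Set.sSup_eq_sUnion, Set.mem_sUnion, Set.iSup_eq_iUnion, Set.mem_iUnion,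
      Set.mem_setOf_eq]
    constructor
    · rintro ⟨a, ⟨t, ht, hat⟩, b, hb, rfl⟩
      exact ⟨t, ht, a, hat, b, hb, rfl⟩
    · rintro ⟨t, ht, a, hat, b, hb, rfl⟩
      exact ⟨a, ⟨t, ht, hat⟩, b, hb, rfl⟩
  sSup_comp := by
    intro S T U s u
    ext h
    simp only [Set.sSup_eq_sUnion, Set.mem_sUnion, Set.iSup_eq_iUnion, Set.mem_iUnion,
      Set.mem_setOf_eq]
    constructor
    · rintro ⟨a, ha, b, ⟨t, ht, hbt⟩, rfl⟩
      exact ⟨t, ht, a, ha, b, hbt, rfl⟩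
    · rintro ⟨t, ht, a, ha, b, hbt, rfl⟩
      exact ⟨a, ha, b, ⟨t, ht, hbt⟩, rfl⟩

variable {B : Type u} [Category.{u} B]

instance {S T : B} : Membership (S ⟶ T) ((freeQuantaloid B).Hom S T) :=
  inferInstanceAs (Membership (S ⟶ T) (Set (S ⟶ T)))

theorem mem_qcast {S S' T T' : B} (hS : S = S') (hT : T = T')
    (s : Set (S ⟶ T)) (f : S' ⟶ T') :
    f ∈ (freeQuantaloid B).cast hS hT s ↔ hcast hS.symm hT.symm f ∈ s := by
  subst hS; subst hT; exact Iff.rfl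

/-- The `QB`-category associated to a concrete category over `B`. -/
def ConcCat.bar (E : ConcCat B) : QCat (freeQuantaloid B) where
  Obj := E.Obj
  ext := E.ext
  hom := E.hom
  one_le X := by
    intro h hh
    rcases hh with rfl
    exact E.id_mem X
  comp_le X Y Z := by
    rintro h ⟨a, ha, b, hb, rfl⟩
    exact E.comp_mem ha hb

/-- The `QB`-functor associated to a concrete functor over `B`. -/
def ConcFun.bar {D E : ConcCat B} (F : ConcFun D E) : QFun D.bar E.bar where
  obj := F.obj
  ext := F.ext
  hom_le X Y := by
    intro f hf
    exact (mem_qcast (F.ext X) (F.ext Y) _ f).mpr (F.mem hf)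

/-- The source on the `QB`-category `Ē` associated to an `E`-structured source
`(g_i : T → |X_i|)`, given by `τ̄(X) = {g_i ∣ X_i = X}`. -/
def barSource (E : ConcCat B) {T : B} {ι : Type u} (X : ι → E.Obj)
    (g : ∀ i, T ⟶ E.ext (X i)) : Source E.bar T :=
  fun _ Z => {f | ∃ (i : ι) (h : X i = Z), hcast rfl (congrArg E.ext h) (g i) = f}

/-- The sink on the `QB`-category `Ē` associated to an `E`-structured sink
`(f_i : |X_i| → T)`, given by `σ̄(X) = {f_i ∣ X_i = X}`. -/
def barSink (E : ConcCat B) {T : B} {ι : Type u} (X : ι → E.Obj)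
    (f : ∀ i, E.ext (X i) ⟶ T) : Sink E.bar T :=
  fun Z _ => {h | ∃ (i : ι) (hE : X i = Z), hcast (congrArg E.ext hE) rfl (f i) = h}
/-! ## Auxiliary lemmas for `fix_representation` -/

namespace FixRep

variable {Q : Quantaloid.{u}}

/-- Universal cast juggler: a cast-equation can be restated with any cast proofs. -/
theorem rejig {A1 B1 A2 B2 W1 W2 V1 V2 : Q.Obj}
    {u : Q.Hom A1 B1} {v : Q.Hom A2 B2}
    (c1 : A1 = W1) (c2 : B1 = W2) (c3 : A2 = W1) (c4 : B2 = W2)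
    (eq : Q.cast c1 c2 u = Q.cast c3 c4 v)
    (d1 : A1 = V1) (d2 : B1 = V2) (d3 : A2 = V1) (d4 : B2 = V2) :
    Q.cast d1 d2 u = Q.cast d3 d4 v := by
  subst c1; subst c2; subst c3; subst c4; subst d1; subst d2
  exact eq

/-- Transitivity of cast-equations. -/
theorem chain {A1 B1 A2 B2 A3 B3 W1 W2 V1 V2 Z1 Z2 : Q.Obj}
    {u : Q.Hom A1 B1} {v : Q.Hom A2 B2} {w : Q.Hom A3 B3}
    (c1 : A1 = W1) (c2 : B1 = W2) (c3 : A2 = W1) (c4 : B2 = W2)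
    (d1 : A2 = V1) (d2 : B2 = V2) (d3 : A3 = V1) (d4 : B3 = V2)
    (e1 : Q.cast c1 c2 u = Q.cast c3 c4 v) (e2 : Q.cast d1 d2 v = Q.cast d3 d4 w)
    (f1 : A1 = Z1) (f2 : B1 = Z2) (f3 : A3 = Z1) (f4 : B3 = Z2) :
    Q.cast f1 f2 u = Q.cast f3 f4 w := by
  subst c1; subst c2; subst c3; subst c4; subst d1; subst d2; subst d3; subst d4
  subst f1; subst f2
  have h1 : u = v := e1
  have h2 : v = w := e2
  exact h1.trans h2

theorem cast_le_cast_of_eq {A1 B1 A2 B2 W1 W2 V1 V2 : Q.Obj}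
    {u : Q.Hom A1 B1} {v : Q.Hom A2 B2}
    (c1 : A1 = W1) (c2 : B1 = W2) (c3 : A2 = W1) (c4 : B2 = W2)
    (eq : Q.cast c1 c2 u = Q.cast c3 c4 v)
    (d1 : A1 = V1) (d2 : B1 = V2) (d3 : A2 = V1) (d4 : B2 = V2) :
    Q.cast d1 d2 u ≤ Q.cast d3 d4 v :=
  le_of_eq (rejig c1 c2 c3 c4 eq d1 d2 d3 d4)

theorem le_cast_of_eq {A1 B1 A2 B2 W1 W2 : Q.Obj}
    {u : Q.Hom A1 B1} {v : Q.Hom A2 B2}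
    (c1 : A1 = W1) (c2 : B1 = W2) (c3 : A2 = W1) (c4 : B2 = W2)
    (eq : Q.cast c1 c2 u = Q.cast c3 c4 v) (d1 : A2 = A1) (d2 : B2 = B1) :
    u ≤ Q.cast d1 d2 v := by
  subst c1; subst c2; subst c3; subst c4
  exact le_of_eq (show u = v from eq)

/-- Transfer of "contains the unit" along a cast-equation. -/
theorem transfer_one {A1 B1 A2 B2 W1 W2 : Q.Obj}
    {a : Q.Hom A1 B1} {d : Q.Hom A2 B2}
    (c1 : A1 = W1) (c2 : B1 = W2) (c3 : A2 = W1) (c4 : B2 = W2)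
    (h : A1 = B1)
    (p : Q.cast rfl h (Q.one A1) ≤ a) (eq : Q.cast c1 c2 a = Q.cast c3 c4 d)
    (h' : A2 = B2) :
    Q.cast rfl h' (Q.one A2) ≤ d := by
  subst c1; subst c2; subst c3; subst c4; subst h
  exact le_of_le_of_eq p (show a = d from eq)

theorem qc_le {S S' T T' : Q.Obj} (hS : S = S') (hT : T = T')
    {u : Q.Hom S T} {v : Q.Hom S' T'} :
    Q.cast hS hT u ≤ v ↔ u ≤ Q.cast hS.symm hT.symm v := by
  subst hS; subst hT; exact Iff.rfl

/-! ### Underlying order -/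

theorem qle_refl (C : QCat Q) (X : C.Obj) : C.le X X := ⟨rfl, C.one_le X⟩

theorem one_le_comp {S T U : Q.Obj} (h1 : S = T) (h2 : T = U) {a : Q.Hom S T} {b : Q.Hom T U}
    (pa : Q.cast rfl h1 (Q.one S) ≤ a) (pb : Q.cast rfl h2 (Q.one T) ≤ b) :
    Q.cast rfl (h1.trans h2) (Q.one S) ≤ Q.comp b a := by
  subst h1; subst h2
  have pa' : Q.one S ≤ a := pa
  have pb' : Q.one S ≤ b := pb
  have goal : Q.one S ≤ Q.comp b a := by
    calc Q.one S = Q.comp (Q.one S) (Q.one S) := (Q.comp_one _).symm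
      _ ≤ Q.comp b (Q.one S) := Quantaloid.comp_mono_left pb' _
      _ ≤ Q.comp b a := Quantaloid.comp_mono_right _ pa'
  exact goal

theorem qle_trans {C : QCat Q} {X Y Z : C.Obj} (hxy : C.le X Y) (hyz : C.le Y Z) :
    C.le X Z := by
  obtain ⟨h1, p1⟩ := hxy
  obtain ⟨h2, p2⟩ := hyz
  exact ⟨h1.trans h2, le_trans (one_le_comp h1 h2 p1 p2) (C.comp_le X Y Z)⟩

theorem le_ext {C : QCat Q} {X Y : C.Obj} (h : C.le X Y) : C.ext X = C.ext Y := h.choose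

theorem qiso_refl (C : QCat Q) (X : C.Obj) : C.iso X X := ⟨qle_refl C X, qle_refl C X⟩

theorem qiso_symm {C : QCat Q} {X Y : C.Obj} (h : C.iso X Y) : C.iso Y X := ⟨h.2, h.1⟩

theorem qiso_trans {C : QCat Q} {X Y Z : C.Obj} (h : C.iso X Y) (h' : C.iso Y Z) :
    C.iso X Z := ⟨qle_trans h.1 h'.1, qle_trans h'.2 h.2⟩

theorem fmono_aux {S S' T T' : Q.Obj} (e1 : S' = S) (e2 : T' = T) (h : S = T)
    {a : Q.Hom S' T'} (p : Q.cast rfl h (Q.one S) ≤ Q.cast e1 e2 a) :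
    Q.cast rfl ((e1.trans h).trans e2.symm) (Q.one S') ≤ a := by
  subst e1; subst e2; subst h; exact p

/-- `Q`-functors are monotone for the underlying order. -/
theorem fmono {C C' : QCat Q} (F : QFun C C') {X Y : C.Obj} (h : C.le X Y) :
    C'.le (F.obj X) (F.obj Y) := by
  obtain ⟨h1, p1⟩ := h
  exact ⟨((F.ext X).trans h1).trans (F.ext Y).symm,
    fmono_aux (F.ext X) (F.ext Y) h1 (le_trans p1 (F.hom_le X Y))⟩

theorem fiso {C C' : QCat Q} (F : QFun C C') {X Y : C.Obj} (h : C.iso X Y) :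
    C'.iso (F.obj X) (F.obj Y) := ⟨fmono F h.1, fmono F h.2⟩

theorem hom_le_aux {S S' T T' : Q.Obj} (hS : S = S') (hT : T = T') (a : Q.Hom S T)
    {u : Q.Hom S' S} {v : Q.Hom T T'}
    (pu : Q.cast rfl hS.symm (Q.one S') ≤ u) (pv : Q.cast rfl hT (Q.one T) ≤ v) :
    Q.cast hS hT a ≤ Q.comp v (Q.comp a u) := by
  subst hS; subst hT
  have pu' : Q.one S ≤ u := pu
  have pv' : Q.one T ≤ v := pv
  have goal : a ≤ Q.comp v (Q.comp a u) := by
    calc a = Q.comp (Q.one T) (Q.comp a (Q.one S)) := by rw [Q.comp_one, Q.one_comp]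
      _ ≤ Q.comp v (Q.comp a (Q.one S)) := Quantaloid.comp_mono_left pv' _
      _ ≤ Q.comp v (Q.comp a u) :=
        Quantaloid.comp_mono_right _ (Quantaloid.comp_mono_right _ pu')
  exact goal

theorem hom_le_hom {C : QCat Q} {X X' Y Y' : C.Obj} (hx : C.le X' X) (hy : C.le Y Y')
    (eS : C.ext X = C.ext X') (eT : C.ext Y = C.ext Y') :
    Q.cast eS eT (C.hom X Y) ≤ C.hom X' Y' := by
  obtain ⟨h1, p1⟩ := hx
  obtain ⟨h2, p2⟩ := hy
  refine le_trans (hom_le_aux eS eT (C.hom X Y) (u := C.hom X' X) (v := C.hom Y Y')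
    ?_ ?_) ?_
  · exact p1
  · exact p2
  · exact le_trans (Quantaloid.comp_mono_right _ (C.comp_le X' X Y)) (C.comp_le X' Y Y')

/-- Hom-arrows are invariant under isomorphism of objects. -/
theorem hom_eq_iso {C : QCat Q} {X X' Y Y' : C.Obj} (hx : C.iso X X') (hy : C.iso Y Y')
    (eS : C.ext X = C.ext X') (eT : C.ext Y = C.ext Y') :
    Q.cast eS eT (C.hom X Y) = C.hom X' Y' := by
  refine le_antisymm (hom_le_hom hx.2 hy.1 eS eT) ?_
  exact (qc_le eS.symm eT.symm).mp (hom_le_hom hx.1 hy.2 eS.symm eT.symm)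

theorem full_le {C : QCat Q} {P : C.Obj → Prop} {a b : (C.full P).Obj}
    (h : C.le a.1 b.1) : (C.full P).le a b := h

theorem full_iso {C : QCat Q} {P : C.Obj → Prop} {a b : (C.full P).Obj}
    (h : C.iso a.1 b.1) : (C.full P).iso a b := h

/-! ### Adjunctions -/

variable {D E : QCat Q}

theorem adj' (L : QFun D E) (R : QFun E D) (adj : QAdj L R) (A : D.Obj) (B : E.Obj) :
    Q.cast (L.ext A) rfl (E.hom (L.obj A) B) =
      Q.cast rfl (R.ext B) (D.hom A (R.obj B)) := adj A B

theorem unit (L : QFun D E) (R : QFun E D) (adj : QAdj L R) (A : D.Obj) :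
    D.le A (R.obj (L.obj A)) :=
  ⟨((R.ext (L.obj A)).trans (L.ext A)).symm,
    transfer_one (L.ext A) rfl rfl (R.ext (L.obj A)) rfl
      (show Q.cast rfl rfl (Q.one (E.ext (L.obj A))) ≤ _ from E.one_le (L.obj A))
      (adj' L R adj A (L.obj A)) _⟩

theorem counit (L : QFun D E) (R : QFun E D) (adj : QAdj L R) (B : E.Obj) :
    E.le (L.obj (R.obj B)) B :=
  ⟨(L.ext (R.obj B)).trans (R.ext B),
    transfer_one rfl (R.ext B) (L.ext (R.obj B)) rfl rfl
      (show Q.cast rfl rfl (Q.one (D.ext (R.obj B))) ≤ _ from D.one_le (R.obj B))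
      (adj' L R adj (R.obj B) B).symm _⟩

theorem iso_RLR (L : QFun D E) (R : QFun E D) (adj : QAdj L R) (B : E.Obj) :
    D.iso (R.obj (L.obj (R.obj B))) (R.obj B) :=
  ⟨fmono R (counit L R adj B), unit L R adj (R.obj B)⟩

theorem iso_LRL (L : QFun D E) (R : QFun E D) (adj : QAdj L R) (A : D.Obj) :
    E.iso (L.obj (R.obj (L.obj A))) (L.obj A) :=
  ⟨counit L R adj (L.obj A), fmono L (unit L R adj A)⟩

theorem adjHom (L : QFun D E) (R : QFun E D) (adj : QAdj L R) (A : D.Obj) (B : E.Obj)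
    (hA : E.ext (L.obj A) = D.ext (R.obj (L.obj A))) (hB : E.ext B = D.ext (R.obj B)) :
    Q.cast hA hB (E.hom (L.obj A) B) = D.hom (R.obj (L.obj A)) (R.obj B) := by
  have e : E.ext (L.obj A) = E.ext (L.obj (R.obj (L.obj A))) :=
    ((L.ext (R.obj (L.obj A))).trans (R.ext (L.obj A))).symm
  have h1 : Q.cast e rfl (E.hom (L.obj A) B) = E.hom (L.obj (R.obj (L.obj A))) B :=
    hom_eq_iso (qiso_symm (iso_LRL L R adj A)) (qiso_refl E B) e rfl
  have h2 := adj' L R adj (R.obj (L.obj A)) B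
  exact chain e rfl rfl rfl (L.ext (R.obj (L.obj A))) rfl rfl (R.ext B) h1 h2 hA hB rfl rfl

/-- The comparison functor `D → Fix(RL)`. -/
def Kfun (L : QFun D E) (R : QFun E D) (adj : QAdj L R) :
    QFun D (D.fix (QFun.comp R L)) where
  obj A := ⟨R.obj (L.obj A), iso_RLR L R adj (L.obj A)⟩
  ext A := (R.ext (L.obj A)).trans (L.ext A)
  hom_le A A' := (QFun.comp R L).hom_le A A'

/-- The comparison functor `E → Fix(RL)`. -/
def Jfun (L : QFun D E) (R : QFun E D) (adj : QAdj L R) :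
    QFun E (D.fix (QFun.comp R L)) where
  obj B := ⟨R.obj B, iso_RLR L R adj B⟩
  ext B := R.ext B
  hom_le B B' := R.hom_le B B'

/-- A right equivalence-inverse is fully faithful on homs. -/
theorem psiHom {W C : QCat Q} (Φ : QFun W C) (Ψ : QFun C W)
    (hFG : ∀ p, C.iso (Φ.obj (Ψ.obj p)) p) (p q : C.Obj) :
    Q.cast (Ψ.ext p).symm (Ψ.ext q).symm (C.hom p q) = W.hom (Ψ.obj p) (Ψ.obj q) := by
  refine le_antisymm ((qc_le (Ψ.ext p).symm (Ψ.ext q).symm).mpr ?_) ?_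
  · exact Ψ.hom_le p q
  · have h4 := hom_eq_iso (hFG p) (hFG q) ((Φ.ext (Ψ.obj p)).trans (Ψ.ext p))
      ((Φ.ext (Ψ.obj q)).trans (Ψ.ext q))
    refine le_trans (Φ.hom_le (Ψ.obj p) (Ψ.obj q)) ?_
    exact cast_le_cast_of_eq ((Φ.ext (Ψ.obj p)).trans (Ψ.ext p))
      ((Φ.ext (Ψ.obj q)).trans (Ψ.ext q)) rfl rfl h4
      (Φ.ext (Ψ.obj p)) (Φ.ext (Ψ.obj q)) (Ψ.ext p).symm (Ψ.ext q).symm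

end FixRep

/-- Theorem 7.4 / [Lai–Shen]: for an adjunction `L ⊣ R` between
`Q`-categories `D` and `E`, a `Q`-category `X` is equivalent to `Fix(RL)` if and only
if there exist essentially surjective `Q`-functors `F : D → X` and `G : E → X` with
`E(LA,B) = X(FA,GB)` for all objects `A` of `D` and `B` of `E`. -/
theorem fix_representation {Q : Quantaloid.{u}} {D E : QCat Q}
    (L : QFun D E) (R : QFun E D) (adj : QAdj L R) (X : QCat Q) :
    QEquiv X (QCat.fix D (QFun.comp R L)) ↔
      ∃ (F : QFun D X) (G : QFun E X), F.EssSurj ∧ G.EssSurj ∧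
        ∀ (A : D.Obj) (B : E.Obj),
          Q.cast (L.ext A) rfl (E.hom (L.obj A) B) =
            Q.cast (F.ext A) (G.ext B) (X.hom (F.obj A) (G.obj B)) := by
  classical
  constructor
  · rintro ⟨Φ, Ψ, hGF, hFG⟩
    refine ⟨QFun.comp Ψ (FixRep.Kfun L R adj), QFun.comp Ψ (FixRep.Jfun L R adj),
      ?_, ?_, ?_⟩
    · intro x
      refine ⟨(Φ.obj x).1, ?_⟩
      refine FixRep.qiso_trans (FixRep.qiso_symm (hGF x)) ?_
      exact FixRep.fiso Ψ (FixRep.full_iso (FixRep.qiso_symm (Φ.obj x).2))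
    · intro x
      refine ⟨L.obj (Φ.obj x).1, ?_⟩
      refine FixRep.qiso_trans (FixRep.qiso_symm (hGF x)) ?_
      exact FixRep.fiso Ψ (FixRep.full_iso (FixRep.qiso_symm (Φ.obj x).2))
    · intro A B
      have h6 := FixRep.adjHom L R adj A B
        ((L.ext A).trans ((R.ext (L.obj A)).trans (L.ext A)).symm) (R.ext B).symm
      have h7 := FixRep.psiHom Φ Ψ hFG ((FixRep.Kfun L R adj).obj A)
        ((FixRep.Jfun L R adj).obj B)
      exact FixRep.chain
        ((L.ext A).trans ((R.ext (L.obj A)).trans (L.ext A)).symm) (R.ext B).symm rfl rfl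
        (Ψ.ext ((FixRep.Kfun L R adj).obj A)).symm
        (Ψ.ext ((FixRep.Jfun L R adj).obj B)).symm rfl rfl
        h6 h7
        (L.ext A) rfl
        ((Ψ.ext ((FixRep.Kfun L R adj).obj A)).trans ((R.ext (L.obj A)).trans (L.ext A)))
        ((Ψ.ext ((FixRep.Jfun L R adj).obj B)).trans (R.ext B))
  · rintro ⟨F, G, hF, hG, heq⟩
    have homFG : ∀ (A : D.Obj) (B : E.Obj),
        Q.cast (F.ext A) (G.ext B) (X.hom (F.obj A) (G.obj B)) =
          Q.cast rfl (R.ext B) (D.hom A (R.obj B)) := fun A B =>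
      FixRep.chain (F.ext A) (G.ext B) (L.ext A) rfl (L.ext A) rfl rfl (R.ext B)
        (heq A B).symm (FixRep.adj' L R adj A B) (F.ext A) (G.ext B) rfl (R.ext B)
    have toD : ∀ (A : D.Obj) (B : E.Obj), X.le (F.obj A) (G.obj B) → D.le A (R.obj B) := by
      intro A B hle
      obtain ⟨h, p⟩ := hle
      exact ⟨(F.ext A).symm.trans (h.trans ((G.ext B).trans (R.ext B).symm)),
        FixRep.transfer_one (F.ext A) (G.ext B) rfl (R.ext B) h p (homFG A B) _⟩
    have fact1a : ∀ B, X.le (F.obj (R.obj B)) (G.obj B) := by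
      intro B
      obtain ⟨h, p⟩ := FixRep.counit L R adj B
      exact ⟨(F.ext (R.obj B)).trans ((R.ext B).trans (G.ext B).symm),
        FixRep.transfer_one (L.ext (R.obj B)) rfl (F.ext (R.obj B)) (G.ext B) h p
          (heq (R.obj B) B) _⟩
    have fact1b : ∀ B, X.le (G.obj B) (F.obj (R.obj B)) := by
      intro B
      obtain ⟨A₀, hA₀⟩ := hF (G.obj B)
      exact FixRep.qle_trans hA₀.1 (FixRep.fmono F (toD A₀ B hA₀.2))
    have fact1 : ∀ B, X.iso (G.obj B) (F.obj (R.obj B)) := fun B => ⟨fact1b B, fact1a B⟩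
    have fact2 : ∀ B B', X.le (G.obj B) (G.obj B') → D.le (R.obj B) (R.obj B') := by
      intro B B' hle
      exact toD (R.obj B) B' (FixRep.qle_trans (fact1a B) hle)
    choose b hbiso using hG
    refine ⟨{ obj := fun x => ⟨R.obj (b x), FixRep.iso_RLR L R adj (b x)⟩
              ext := fun x => (R.ext (b x)).trans
                ((G.ext (b x)).symm.trans (FixRep.le_ext (hbiso x).1).symm)
              hom_le := fun x x' => ?_ },
      QFun.comp F (QCat.incl D _), ?_, ?_⟩
    · -- hom_le of Φ'
      have e1 : X.ext x = X.ext (G.obj (b x)) := FixRep.le_ext (hbiso x).1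
      have e2 : X.ext x' = X.ext (G.obj (b x')) := FixRep.le_ext (hbiso x').1
      have f1 : X.ext (G.obj (b x)) = X.ext (F.obj (R.obj (b x))) :=
        (G.ext (b x)).trans ((R.ext (b x)).symm.trans (F.ext (R.obj (b x))).symm)
      have E1 := FixRep.hom_eq_iso (hbiso x) (hbiso x') e1 e2
      have E2 := FixRep.hom_eq_iso (fact1 (b x)) (FixRep.qiso_refl X (G.obj (b x'))) f1 rfl
      have E12 := FixRep.chain e1 e2 rfl rfl f1 rfl rfl rfl E1 E2 (e1.trans f1) e2 rfl rfl
      have E123 := FixRep.chain (e1.trans f1) e2 rfl rfl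
        (F.ext (R.obj (b x))) (G.ext (b x')) rfl (R.ext (b x'))
        E12 (homFG (R.obj (b x)) (b x'))
        ((e1.trans f1).trans (F.ext (R.obj (b x)))) (e2.trans (G.ext (b x')))
        rfl (R.ext (b x'))
      exact FixRep.le_cast_of_eq ((e1.trans f1).trans (F.ext (R.obj (b x))))
        (e2.trans (G.ext (b x'))) rfl (R.ext (b x')) E123 _ _
    · -- Ψ' ∘ Φ' ≅ 1
      intro x
      exact FixRep.qiso_trans (FixRep.qiso_symm (fact1 (b x)))
        (FixRep.qiso_symm (hbiso x))
    · -- Φ' ∘ Ψ' ≅ 1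
      intro p
      refine FixRep.full_iso ?_
      have gl : X.iso (G.obj (L.obj p.1)) (G.obj (b (F.obj p.1))) :=
        FixRep.qiso_trans (fact1 (L.obj p.1))
          (FixRep.qiso_trans (FixRep.fiso F p.2) (hbiso (F.obj p.1)))
      have d1 : D.le (R.obj (L.obj p.1)) (R.obj (b (F.obj p.1))) :=
        fact2 (L.obj p.1) (b (F.obj p.1)) gl.1
      have d2 : D.le (R.obj (b (F.obj p.1))) (R.obj (L.obj p.1)) :=
        fact2 (b (F.obj p.1)) (L.obj p.1) gl.2
      exact FixRep.qiso_trans ⟨d2, d1⟩ p.2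
end

section
/- Let Q be a quantaloid and let L ⊣ R be an adjunction between total Q-categories D and E. Then a total Q-category X is equivalent to Fix(RL) if and only if there exist dense Q-functors F : A → X and K : A → D and codense Q-functors G : C → X and H : C → E such that E(LKA, HC) = X(FA, GC) for all A ∈ A₀ and C ∈ C₀. -/
universe u

/-! ## Concrete categories over a base category -/

open CategoryTheory

variable {B : Type u} [Category.{u} B]

variable {B : Type u} [Category.{u} B]

/-! ## Toolkit for the main theorem -/

namespace Quantaloid

variable {Q : Quantaloid.{u}}

theorem cast_rfl_rfl {S T : Q.Obj} (u : Q.Hom S T) : Q.cast rfl rfl u = u := rfl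

theorem cast_self {S T : Q.Obj} (h : S = S) (h' : T = T) (u : Q.Hom S T) :
    Q.cast h h' u = u := rfl

theorem cast_irrel {S S' T T' : Q.Obj} (h1 h2 : S = S') (k1 k2 : T = T')
    (u : Q.Hom S T) : Q.cast h1 k1 u = Q.cast h2 k2 u := rfl

theorem cast_le_cast_iff {S S' T T' : Q.Obj} (hS : S = S') (hT : T = T')
    {u v : Q.Hom S T} : Q.cast hS hT u ≤ Q.cast hS hT v ↔ u ≤ v := by
  subst hS; subst hT; exact Iff.rfl

theorem cast_le_iff {S S' T T' : Q.Obj} (hS : S = S') (hT : T = T')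
    {u : Q.Hom S T} {v : Q.Hom S' T'} :
    Q.cast hS hT u ≤ v ↔ u ≤ Q.cast hS.symm hT.symm v := by
  subst hS; subst hT; exact Iff.rfl

theorem le_cast_iff {S S' T T' : Q.Obj} (hS : S = S') (hT : T = T')
    {u : Q.Hom S' T'} {v : Q.Hom S T} :
    u ≤ Q.cast hS hT v ↔ Q.cast hS.symm hT.symm u ≤ v := by
  subst hS; subst hT; exact Iff.rfl

theorem cast_eq_iff {S S' T T' : Q.Obj} (hS : S = S') (hT : T = T')
    {u : Q.Hom S T} {v : Q.Hom S' T'} :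
    Q.cast hS hT u = v ↔ u = Q.cast hS.symm hT.symm v := by
  subst hS; subst hT; exact Iff.rfl

theorem cast_comp_cast {S S' T T' U U' : Q.Obj} (h1 : S = S') (h2 : T = T')
    (h3 : U = U') (v : Q.Hom T U) (u : Q.Hom S T) :
    Q.comp (Q.cast h2 h3 v) (Q.cast h1 h2 u) = Q.cast h1 h3 (Q.comp v u) := by
  subst h1; subst h2; subst h3; rfl

theorem cast_lda {S S' T T' U U' : Q.Obj} (h1 : S = S') (h2 : T = T') (h3 : U = U')
    (w : Q.Hom S U) (u : Q.Hom S T) :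
    Q.cast h2 h3 (Q.lda w u) = Q.lda (Q.cast h1 h3 w) (Q.cast h1 h2 u) := by
  subst h1; subst h2; subst h3; rfl

theorem cast_rda {S S' T T' U U' : Q.Obj} (h1 : S = S') (h2 : T = T') (h3 : U = U')
    (v : Q.Hom T U) (w : Q.Hom S U) :
    Q.cast h1 h2 (Q.rda v w) = Q.rda (Q.cast h2 h3 v) (Q.cast h1 h3 w) := by
  subst h1; subst h2; subst h3; rfl

theorem cast_iInf {ι : Sort*} {S S' T T' : Q.Obj} (hS : S = S') (hT : T = T')
    (f : ι → Q.Hom S T) : Q.cast hS hT (⨅ i, f i) = ⨅ i, Q.cast hS hT (f i) := by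
  subst hS; subst hT; rfl

theorem cast_one {S T : Q.Obj} (h : S = T) : Q.cast h h (Q.one S) = Q.one T := by
  subst h; rfl

theorem comp_cast_one {S T U : Q.Obj} (h : S = T) (v : Q.Hom T U) :
    Q.comp v (Q.cast rfl h (Q.one S)) = Q.cast h.symm rfl v := by
  subst h; exact Q.comp_one v

theorem cast_one_comp {S T U : Q.Obj} (h : T = S) (u : Q.Hom U S) :
    Q.comp (Q.cast h rfl (Q.one T)) u = Q.cast rfl h.symm u := by
  subst h; exact Q.one_comp u

theorem one_cast_comp {S T U : Q.Obj} (h : T = S) (u : Q.Hom U T) :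
    Q.comp (Q.cast rfl h (Q.one T)) u = Q.cast rfl h u := by
  subst h; exact Q.one_comp u

theorem lda_mono {S T U : Q.Obj} {w w' : Q.Hom S U} (h : w ≤ w') (u : Q.Hom S T) :
    Q.lda w u ≤ Q.lda w' u :=
  le_lda.mp (le_trans (comp_lda_le w u) h)

theorem lda_anti {S T U : Q.Obj} {u u' : Q.Hom S T} (h : u ≤ u') (w : Q.Hom S U) :
    Q.lda w u' ≤ Q.lda w u :=
  le_lda.mp (le_trans (comp_mono_right _ h) (comp_lda_le w u'))

theorem rda_mono {S T U : Q.Obj} (v : Q.Hom T U) {w w' : Q.Hom S U} (h : w ≤ w') :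
    Q.rda v w ≤ Q.rda v w' :=
  le_rda.mp (le_trans (comp_rda_le v w) h)

theorem rda_anti {S T U : Q.Obj} {v v' : Q.Hom T U} (h : v ≤ v') (w : Q.Hom S U) :
    Q.rda v' w ≤ Q.rda v w :=
  le_rda.mp (le_trans (comp_mono_left h _) (comp_rda_le v' w))

theorem lda_one {S T : Q.Obj} (w : Q.Hom S T) : Q.lda w (Q.one S) = w := by
  refine le_antisymm ?_ (le_lda.mp (le_of_eq (Q.comp_one w)))
  have := comp_lda_le w (Q.one S)
  rwa [Q.comp_one] at this

theorem rda_one {S T : Q.Obj} (w : Q.Hom S T) : Q.rda (Q.one T) w = w := by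
  refine le_antisymm ?_ (le_rda.mp (le_of_eq (Q.one_comp w)))
  have := comp_rda_le (Q.one T) w
  rwa [Q.one_comp] at this

theorem one_le_lda_iff {S T : Q.Obj} {u w : Q.Hom S T} :
    Q.one T ≤ Q.lda w u ↔ u ≤ w := by
  constructor
  · intro h
    have := comp_mono_left h u
    rw [Q.one_comp] at this
    exact le_trans this (comp_lda_le w u)
  · intro h
    exact le_lda.mp (le_trans (le_of_eq (Q.one_comp u)) h)

theorem one_le_rda_iff {S T : Q.Obj} {v w : Q.Hom S T} :
    Q.one S ≤ Q.rda v w ↔ v ≤ w := by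
  constructor
  · intro h
    have := comp_mono_right v h
    rw [Q.comp_one] at this
    exact le_trans this (comp_rda_le v w)
  · intro h
    exact le_rda.mp (le_trans (le_of_eq (Q.comp_one v)) h)

end Quantaloid

section OrderLemmas

open Quantaloid

variable {Q : Quantaloid.{u}} {E : QCat Q}

theorem QCat.le_refl' (E : QCat Q) (X : E.Obj) : E.le X X :=
  ⟨rfl, E.one_le X⟩

theorem QCat.le_of_cast_one {X Y : E.Obj} (h : E.ext X = E.ext Y)
    (hle : Q.cast rfl h (Q.one (E.ext X)) ≤ E.hom X Y) : E.le X Y := ⟨h, hle⟩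

theorem QCat.le_one_le {X Y : E.Obj} (h : E.le X Y) (h' : E.ext X = E.ext Y) :
    Q.cast rfl h' (Q.one (E.ext X)) ≤ E.hom X Y := by
  obtain ⟨h0, hle⟩ := h
  exact (cast_irrel rfl rfl h' h0 _) ▸ hle

/-- Transport homs along `≤` in the first variable. -/
theorem QCat.le_hom_left {X X' Z : E.Obj} (h : E.le X' X) (hE : E.ext X = E.ext X') :
    Q.cast hE rfl (E.hom X Z) ≤ E.hom X' Z := by
  have h1 : Q.cast rfl hE.symm (Q.one (E.ext X')) ≤ E.hom X' X := le_one_le h hE.symm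
  have h2 : Q.comp (E.hom X Z) (Q.cast rfl hE.symm (Q.one (E.ext X'))) ≤
      Q.comp (E.hom X Z) (E.hom X' X) := comp_mono_right _ h1
  rw [comp_cast_one] at h2
  exact le_trans (le_of_eq (cast_irrel hE hE.symm.symm rfl rfl _)) (le_trans h2 (E.comp_le X' X Z))

/-- Transport homs along `≤` in the second variable. -/
theorem QCat.le_hom_right {Z Y Y' : E.Obj} (h : E.le Y Y') (hE : E.ext Y = E.ext Y') :
    Q.cast rfl hE (E.hom Z Y) ≤ E.hom Z Y' := by
  have h1 : Q.cast rfl hE (Q.one (E.ext Y)) ≤ E.hom Y Y' := le_one_le h hE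
  have h2 : Q.comp (Q.cast rfl hE (Q.one (E.ext Y))) (E.hom Z Y) ≤
      Q.comp (E.hom Y Y') (E.hom Z Y) := comp_mono_left h1 _
  rw [one_cast_comp] at h2
  exact le_trans h2 (E.comp_le Z Y Y')

theorem QCat.hom_congr_left {X X' : E.Obj} (h : E.iso X X') (hE : E.ext X = E.ext X')
    (Z : E.Obj) : Q.cast hE rfl (E.hom X Z) = E.hom X' Z := by
  refine le_antisymm (le_hom_left h.2 hE) ?_
  rw [le_cast_iff]
  exact le_hom_left h.1 hE.symm

theorem QCat.hom_congr_right {Z Y Y' : E.Obj} (h : E.iso Y Y') (hE : E.ext Y = E.ext Y') :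
    Q.cast rfl hE (E.hom Z Y) = E.hom Z Y' := by
  refine le_antisymm (le_hom_right h.1 hE) ?_
  rw [le_cast_iff]
  exact le_hom_right h.2 hE.symm

theorem QCat.le_trans' {X Y Z : E.Obj} (h1 : E.le X Y) (h2 : E.le Y Z) : E.le X Z := by
  obtain ⟨e1, hle1⟩ := id h1
  obtain ⟨e2, -⟩ := id h2
  refine ⟨e1.trans e2, ?_⟩
  have key : Q.cast rfl (e1.trans e2) (Q.one (E.ext X)) =
      Q.cast rfl e2 (Q.cast rfl e1 (Q.one (E.ext X))) := by
    rw [Quantaloid.cast_cast]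
  rw [key]
  exact le_trans (cast_mono rfl e2 hle1) (QCat.le_hom_right h2 e2)

theorem QCat.iso_refl (E : QCat Q) (X : E.Obj) : E.iso X X :=
  ⟨E.le_refl' X, E.le_refl' X⟩

theorem QCat.iso_symm {X Y : E.Obj} (h : E.iso X Y) : E.iso Y X := ⟨h.2, h.1⟩

theorem QCat.iso_trans {X Y Z : E.Obj} (h1 : E.iso X Y) (h2 : E.iso Y Z) : E.iso X Z :=
  ⟨QCat.le_trans' h1.1 h2.1, QCat.le_trans' h2.2 h1.2⟩

/-- A `Q`-functor preserves the underlying order. -/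
theorem QFun.le_map {D : QCat Q} (F : QFun D E) {X Y : D.Obj} (h : D.le X Y) :
    E.le (F.obj X) (F.obj Y) := by
  obtain ⟨e, hle⟩ := h
  refine ⟨(F.ext X).trans (e.trans (F.ext Y).symm), ?_⟩
  have h1 := le_trans hle (F.hom_le X Y)
  rw [le_cast_iff] at h1
  rw [Quantaloid.cast_cast] at h1
  refine le_trans (le_of_eq ?_) h1
  rw [← Quantaloid.cast_one (Q := Q) (F.ext X).symm, Quantaloid.cast_cast]

theorem QFun.iso_map {D : QCat Q} (F : QFun D E) {X Y : D.Obj} (h : D.iso X Y) :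
    E.iso (F.obj X) (F.obj Y) := ⟨F.le_map h.1, F.le_map h.2⟩

end OrderLemmas

namespace Quantaloid

variable {Q : Quantaloid.{u}}

theorem comp_iSup {ι : Sort*} {S T U : Q.Obj} (v : Q.Hom T U) (u : ι → Q.Hom S T) :
    Q.comp v (⨆ i, u i) = ⨆ i, Q.comp v (u i) := by
  rw [iSup, Q.comp_sSup]
  exact le_antisymm (iSup₂_le fun x hx => by
      obtain ⟨i, rfl⟩ := hx; exact le_iSup (fun i => Q.comp v (u i)) i)
    (iSup_le fun i => le_iSup₂ (f := fun x _ => Q.comp v x) (u i) ⟨i, rfl⟩)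

theorem iSup_comp {ι : Sort*} {S T U : Q.Obj} (v : ι → Q.Hom T U) (u : Q.Hom S T) :
    Q.comp (⨆ i, v i) u = ⨆ i, Q.comp (v i) u := by
  rw [iSup, Q.sSup_comp]
  exact le_antisymm (iSup₂_le fun x hx => by
      obtain ⟨i, rfl⟩ := hx; exact le_iSup (fun i => Q.comp (v i) u) i)
    (iSup_le fun i => le_iSup₂ (f := fun x _ => Q.comp x u) (v i) ⟨i, rfl⟩)

theorem lda_iSup {ι : Sort*} {S T U : Q.Obj} (w : Q.Hom S U) (u : ι → Q.Hom S T) :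
    Q.lda w (⨆ i, u i) = ⨅ i, Q.lda w (u i) := by
  refine le_antisymm (le_iInf fun i => lda_anti (le_iSup u i) w) (le_lda.mp ?_)
  rw [comp_iSup]
  exact iSup_le fun i => le_trans
    (comp_mono_left (iInf_le (fun i => Q.lda w (u i)) i) (u i)) (comp_lda_le w (u i))

theorem rda_iSup {ι : Sort*} {S T U : Q.Obj} (v : ι → Q.Hom T U) (w : Q.Hom S U) :
    Q.rda (⨆ i, v i) w = ⨅ i, Q.rda (v i) w := by
  refine le_antisymm (le_iInf fun i => rda_anti (le_iSup v i) w) (le_rda.mp ?_)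
  rw [iSup_comp]
  exact iSup_le fun i => le_trans
    (comp_mono_right (v i) (iInf_le (fun i => Q.rda (v i) w) i)) (comp_rda_le (v i) w)

theorem lda_iInf {ι : Sort*} {S T U : Q.Obj} (w : ι → Q.Hom S U) (u : Q.Hom S T) :
    Q.lda (⨅ i, w i) u = ⨅ i, Q.lda (w i) u := by
  refine le_antisymm (le_iInf fun i => lda_mono (iInf_le w i) u) (le_lda.mp (le_iInf fun i =>
    le_trans (comp_mono_left (iInf_le (fun i => Q.lda (w i) u) i) u) (comp_lda_le (w i) u)))

theorem rda_iInf {ι : Sort*} {S T U : Q.Obj} (v : Q.Hom T U) (w : ι → Q.Hom S U) :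
    Q.rda v (⨅ i, w i) = ⨅ i, Q.rda v (w i) := by
  refine le_antisymm (le_iInf fun i => rda_mono v (iInf_le w i)) (le_rda.mp (le_iInf fun i =>
    le_trans (comp_mono_right v (iInf_le (fun i => Q.rda v (w i)) i)) (comp_rda_le v (w i))))

theorem lda_comp {S T T' U : Q.Obj} (w : Q.Hom S U) (v : Q.Hom T T') (u : Q.Hom S T) :
    Q.lda w (Q.comp v u) = Q.lda (Q.lda w u) v := by
  refine le_antisymm (le_lda.mp (le_lda.mp ?_)) (le_lda.mp ?_)
  · rw [Q.comp_assoc]; exact comp_lda_le w (Q.comp v u)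
  · rw [← Q.comp_assoc]
    exact le_trans (comp_mono_left (comp_lda_le (Q.lda w u) v) u) (comp_lda_le w u)

theorem rda_comp {S T T' U : Q.Obj} (v : Q.Hom T' U) (v' : Q.Hom T T') (w : Q.Hom S U) :
    Q.rda (Q.comp v v') w = Q.rda v' (Q.rda v w) := by
  refine le_antisymm (le_rda.mp (le_rda.mp ?_)) (le_rda.mp ?_)
  · rw [← Q.comp_assoc]; exact comp_rda_le (Q.comp v v') w
  · rw [Q.comp_assoc]
    exact le_trans (comp_mono_right v (comp_rda_le v' (Q.rda v w))) (comp_rda_le v w)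

end Quantaloid

section ColimLemmas

open Quantaloid

variable {Q : Quantaloid.{u}} {A D E X : QCat Q}

/-- Yoneda: `⋀_y E(y,z) ↙ E(y,w) = E(w,z)`. -/
theorem yoneda (E : QCat Q) (w z : E.Obj) :
    ⨅ y : E.Obj, Q.lda (E.hom y z) (E.hom y w) = E.hom w z := by
  refine le_antisymm (le_trans (iInf_le _ w) ?_) (le_iInf fun y => le_lda.mp (E.comp_le y w z))
  exact le_trans (lda_anti (E.one_le w) _) (le_of_eq (lda_one _))

/-- co-Yoneda: `⋀_y E(w,y) ↘ E(z,y) = E(z,w)`. -/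
theorem coyoneda (E : QCat Q) (w z : E.Obj) :
    ⨅ y : E.Obj, Q.rda (E.hom w y) (E.hom z y) = E.hom z w := by
  refine le_antisymm (le_trans (iInf_le _ w) ?_) (le_iInf fun y => le_rda.mp (E.comp_le z w y))
  exact le_trans (rda_anti (E.one_le w) _) (le_of_eq (rda_one _))

theorem IsSup.unit {T : Q.Obj} {σ : Sink E T} {Y : E.Obj} (hs : IsSup E σ Y) (y : E.Obj) :
    σ y PUnit.unit ≤ Q.cast rfl hs.ext (E.hom y Y) := by
  have h1 : Q.cast hs.ext rfl (Q.one (E.ext Y)) ≤ Q.lda (E.hom y Y) (σ y PUnit.unit) :=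
    le_trans (cast_mono _ _ (E.one_le Y)) (le_trans (le_of_eq (hs.hom Y)) (iInf_le _ y))
  have h2 := le_trans (comp_mono_left h1 (σ y PUnit.unit)) (comp_lda_le _ _)
  erw [cast_one_comp] at h2
  erw [le_cast_iff]
  exact h2

theorem IsColim.unit {T : Q.Obj} {F : QFun A E} {σ : Sink A T} {Y : E.Obj}
    (hc : IsColim F σ Y) (a : A.Obj) :
    σ a PUnit.unit ≤ Q.cast rfl hc.ext (F.graph a Y) := by
  have h1 : Q.cast hc.ext rfl (Q.one (E.ext Y)) ≤ Q.lda (F.graph a Y) (σ a PUnit.unit) :=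
    le_trans (cast_mono _ _ (E.one_le Y)) (le_trans (le_of_eq (hc.hom Y)) (iInf_le _ a))
  have h2 := le_trans (comp_mono_left h1 (σ a PUnit.unit)) (comp_lda_le _ _)
  erw [cast_one_comp] at h2
  erw [le_cast_iff]
  exact h2

theorem IsLim.counit {T : Q.Obj} {F : QFun A E} {τ : Source A T} {Y : E.Obj}
    (hl : IsLim F τ Y) (c : A.Obj) :
    τ PUnit.unit c ≤ Q.cast hl.ext rfl (F.cograph Y c) := by
  have h1 : Q.cast rfl hl.ext (Q.one (E.ext Y)) ≤
      Q.rda (τ PUnit.unit c) (F.cograph Y c) :=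
    le_trans (cast_mono _ _ (E.one_le Y)) (le_trans (le_of_eq (hl.hom Y)) (iInf_le _ c))
  have h2 := le_trans (comp_mono_right _ h1) (comp_rda_le _ _)
  erw [comp_cast_one] at h2
  erw [le_cast_iff]
  exact h2

/-- A total `Q`-category has all weighted colimits. -/
theorem total_colim (hE : E.Total) (F : QFun A E) {T : Q.Obj} (σ : Sink A T) :
    ∃ Y : E.Obj, IsColim F σ Y := by
  obtain ⟨Y, hs⟩ := hE T (fun y _ => ⨆ a : A.Obj, Q.comp (σ a PUnit.unit) (F.cograph y a))
  refine ⟨Y, hs.ext, fun Z => ?_⟩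
  rw [hs.hom Z]
  show ⨅ y : E.Obj, Q.lda (E.hom y Z) (⨆ a, Q.comp (σ a PUnit.unit) (F.cograph y a)) = _
  have step1 : ∀ y : E.Obj,
      Q.lda (E.hom y Z) (⨆ a : A.Obj, Q.comp (σ a PUnit.unit) (F.cograph y a)) =
      ⨅ a : A.Obj, Q.lda (Q.lda (E.hom y Z) (F.cograph y a)) (σ a PUnit.unit) := by
    intro y
    rw [lda_iSup]
    exact iInf_congr fun a => lda_comp _ _ _
  rw [iInf_congr step1, iInf_comm]
  refine iInf_congr fun a => ?_
  rw [← lda_iInf]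
  congr 1
  have step2 : ∀ y : E.Obj, Q.lda (E.hom y Z) (F.cograph y a) =
      Q.cast (F.ext a) rfl (Q.lda (E.hom y Z) (E.hom y (F.obj a))) := by
    intro y
    rw [cast_lda rfl (F.ext a) rfl]
    rfl
  rw [iInf_congr step2, ← cast_iInf, yoneda]
  rfl

/-- A total `Q`-category has all weighted limits. -/
theorem total_lim (hE : E.Total) (F : QFun A E) {T : Q.Obj} (τ : Source A T) :
    ∃ Y : E.Obj, IsLim F τ Y := by
  set N : Sink E T := fun z _ => ⨅ c : A.Obj, Q.rda (τ PUnit.unit c) (F.cograph z c) with hN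
  obtain ⟨Y, hs⟩ := hE T N
  have key : ∀ c : A.Obj,
      τ PUnit.unit c ≤ Q.cast hs.ext (F.ext c) (E.hom Y (F.obj c)) := by
    intro c
    have h1 : Q.cast hs.ext rfl (E.hom Y (F.obj c)) =
        ⨅ z : E.Obj, Q.lda (E.hom z (F.obj c)) (N z PUnit.unit) := hs.hom (F.obj c)
    have h2 : Q.cast hs.ext (F.ext c) (E.hom Y (F.obj c)) =
        Q.cast rfl (F.ext c) (Q.cast hs.ext rfl (E.hom Y (F.obj c))) := by
      rw [Quantaloid.cast_cast]
    erw [h2, h1, cast_iInf]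
    refine le_iInf fun z => ?_
    have h3 : Q.cast rfl (F.ext c) (Q.lda (E.hom z (F.obj c)) (N z PUnit.unit)) =
        Q.lda (F.cograph z c) (N z PUnit.unit) := by
      rw [cast_lda rfl rfl (F.ext c)]
      rfl
    erw [h3]
    refine le_lda.mp ?_
    exact le_trans (comp_mono_right _ (iInf_le _ c)) (comp_rda_le _ _)
  refine ⟨Y, hs.ext, fun Z => ?_⟩
  show _ = ⨅ c : A.Obj, Q.rda (τ PUnit.unit c) (F.cograph Z c)
  refine le_antisymm (le_iInf fun c => le_rda.mp ?_) ?_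
  · have h4 : Q.comp (τ PUnit.unit c) (Q.cast rfl hs.ext (E.hom Z Y)) ≤
        Q.comp (Q.cast hs.ext (F.ext c) (E.hom Y (F.obj c)))
          (Q.cast rfl hs.ext (E.hom Z Y)) := comp_mono_left (key c) _
    rw [cast_comp_cast rfl hs.ext (F.ext c)] at h4
    exact le_trans h4 (cast_mono rfl (F.ext c) (E.comp_le Z Y (F.obj c)))
  · have := hs.unit Z
    exact le_trans (le_of_eq rfl) (hs.unit Z)

theorem QFun.Dense.canonical {Q : Quantaloid.{u}} {A X : QCat Q} {F : QFun A X}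
    (hF : F.Dense) (x : X.Obj) : IsColim F (fun a _ => F.graph a x) x := by
  obtain ⟨T, σ, hc⟩ := hF x
  refine ⟨rfl, fun z => ?_⟩
  show Q.cast rfl rfl (X.hom x z) = ⨅ a : A.Obj, Q.lda (F.graph a z) (F.graph a x)
  rw [Quantaloid.cast_rfl_rfl]
  refine le_antisymm (le_iInf fun a => Quantaloid.le_lda.mp ?_) ?_
  · have key : Q.comp (X.hom x z) (F.graph a x) =
        Q.cast (F.ext a) rfl (Q.comp (X.hom x z) (X.hom (F.obj a) x)) := by
      show Q.comp (Q.cast rfl rfl (X.hom x z)) (Q.cast (F.ext a) rfl (X.hom (F.obj a) x)) = _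
      rw [Quantaloid.cast_comp_cast (F.ext a) rfl rfl]
    rw [key]
    exact Quantaloid.cast_mono _ _ (X.comp_le _ _ _)
  · have hx : X.hom x z =
        Q.cast hc.ext.symm rfl (⨅ a : A.Obj, Q.lda (F.graph a z) (σ a PUnit.unit)) := by
      have h0 := hc.hom z
      erw [Quantaloid.cast_eq_iff] at h0
      exact h0
    rw [hx, Quantaloid.cast_iInf]
    refine le_iInf fun a => le_trans (iInf_le _ a) ?_
    have h5 : Q.cast hc.ext.symm rfl (Q.lda (F.graph a z) (σ a PUnit.unit)) =
        Q.lda (F.graph a z) (Q.cast rfl hc.ext.symm (σ a PUnit.unit)) := by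
      erw [Quantaloid.cast_lda rfl hc.ext.symm rfl]
      rfl
    rw [h5]
    refine Quantaloid.lda_anti ?_ _
    have h6 := hc.unit a
    erw [Quantaloid.le_cast_iff] at h6
    exact h6

theorem QFun.Codense.canonical {Q : Quantaloid.{u}} {C X : QCat Q} {G : QFun C X}
    (hG : G.Codense) (x : X.Obj) : IsLim G (fun _ c => G.cograph x c) x := by
  obtain ⟨T, τ, hl⟩ := hG x
  refine ⟨rfl, fun z => ?_⟩
  show Q.cast rfl rfl (X.hom z x) = ⨅ c : C.Obj, Q.rda (G.cograph x c) (G.cograph z c)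
  rw [Quantaloid.cast_rfl_rfl]
  refine le_antisymm (le_iInf fun c => Quantaloid.le_rda.mp ?_) ?_
  · have key : Q.comp (G.cograph x c) (X.hom z x) =
        Q.cast rfl (G.ext c) (Q.comp (X.hom x (G.obj c)) (X.hom z x)) := by
      show Q.comp (Q.cast rfl (G.ext c) (X.hom x (G.obj c)))
        (Q.cast rfl rfl (X.hom z x)) = _
      rw [Quantaloid.cast_comp_cast rfl rfl (G.ext c)]
    rw [key]
    exact Quantaloid.cast_mono _ _ (X.comp_le _ _ _)
  · have hx : X.hom z x =
        Q.cast rfl hl.ext.symm (⨅ c : C.Obj, Q.rda (τ PUnit.unit c) (G.cograph z c)) := by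
      have h0 := hl.hom z
      erw [Quantaloid.cast_eq_iff] at h0
      exact h0
    rw [hx, Quantaloid.cast_iInf]
    refine le_iInf fun c => le_trans (iInf_le _ c) ?_
    have h5 : Q.cast rfl hl.ext.symm (Q.rda (τ PUnit.unit c) (G.cograph z c)) =
        Q.rda (Q.cast hl.ext.symm rfl (τ PUnit.unit c)) (G.cograph z c) := by
      erw [Quantaloid.cast_rda rfl hl.ext.symm rfl]
      rfl
    rw [h5]
    refine Quantaloid.rda_anti ?_ _
    have h6 := hl.counit c
    erw [Quantaloid.le_cast_iff] at h6
    exact h6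

theorem colim_le {Q : Quantaloid.{u}} {A E : QCat Q} {F : QFun A E} {T T' : Q.Obj}
    {σ : Sink A T} {σ' : Sink A T'} {Y Y' : E.Obj}
    (h1 : IsColim F σ Y) (h2 : IsColim F σ' Y') (e : T = T')
    (hw : ∀ a, Q.cast rfl e (σ a PUnit.unit) ≤ σ' a PUnit.unit) : E.le Y Y' := by
  have hy : E.ext Y = E.ext Y' := h1.ext.trans (e.trans h2.ext.symm)
  refine ⟨hy, ?_⟩
  refine (Quantaloid.cast_le_cast_iff h1.ext (rfl : E.ext Y' = E.ext Y')).mp ?_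
  rw [h1.hom Y']
  show _ ≤ ⨅ a : A.Obj, Q.lda (F.graph a Y') (σ a PUnit.unit)
  refine le_iInf fun a => Quantaloid.le_lda.mp ?_
  have e1 : Q.cast h1.ext rfl (Q.cast rfl hy (Q.one (E.ext Y))) =
      Q.cast (h2.ext.trans e.symm) rfl (Q.one (E.ext Y')) := by
    rw [Quantaloid.cast_cast, ← Quantaloid.cast_one (Q := Q) hy, Quantaloid.cast_cast]
  erw [e1, Quantaloid.cast_one_comp]
  have h6 := le_trans (hw a) (h2.unit a)
  erw [Quantaloid.le_cast_iff, Quantaloid.cast_cast] at h6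
  exact h6

theorem colim_unique {Q : Quantaloid.{u}} {A E : QCat Q} {F : QFun A E} {T T' : Q.Obj}
    {σ : Sink A T} {σ' : Sink A T'} {Y Y' : E.Obj}
    (h1 : IsColim F σ Y) (h2 : IsColim F σ' Y') (e : T = T')
    (hw : ∀ a, Q.cast rfl e (σ a PUnit.unit) = σ' a PUnit.unit) : E.iso Y Y' := by
  refine ⟨colim_le h1 h2 e fun a => le_of_eq (hw a), colim_le h2 h1 e.symm fun a => ?_⟩
  erw [← hw a, Quantaloid.cast_cast, Quantaloid.cast_self]
  exact le_rfl

section Adjunction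

open Quantaloid

variable {Q : Quantaloid.{u}} {A C D E : QCat Q} {L : QFun D E} {R : QFun E D}

/-- Reformulation of the adjunction: `E(LX, Y)` is `D(X, RY)` up to casting. -/
theorem QAdj.hom_eq (adj : QAdj L R) (X : D.Obj) (Y : E.Obj) :
    Q.cast (L.ext X) rfl (E.hom (L.obj X) Y) =
      Q.cast rfl (R.ext Y) (D.hom X (R.obj Y)) := adj X Y

theorem QAdj.graph_comp (adj : QAdj L R) (K : QFun A D) (a : A.Obj) (Z : E.Obj) :
    (QFun.comp L K).graph a Z = Q.cast rfl (R.ext Z) (K.graph a (R.obj Z)) := by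
  show Q.cast ((L.ext (K.obj a)).trans (K.ext a)) rfl (E.hom (L.obj (K.obj a)) Z) = _
  have e1 : Q.cast ((L.ext (K.obj a)).trans (K.ext a)) rfl (E.hom (L.obj (K.obj a)) Z) =
      Q.cast (K.ext a) rfl (Q.cast (L.ext (K.obj a)) rfl (E.hom (L.obj (K.obj a)) Z)) := by
    rw [Quantaloid.cast_cast]
  rw [e1, adj.hom_eq (K.obj a) Z]
  show _ = Q.cast rfl (R.ext Z) (Q.cast (K.ext a) rfl (D.hom (K.obj a) (R.obj Z)))
  rw [Quantaloid.cast_cast, Quantaloid.cast_cast]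

theorem QAdj.cograph_comp (adj : QAdj L R) (H : QFun C E) (Z : D.Obj) (c : C.Obj) :
    (QFun.comp R H).cograph Z c = Q.cast (L.ext Z) rfl (H.cograph (L.obj Z) c) := by
  show Q.cast rfl ((R.ext (H.obj c)).trans (H.ext c)) (D.hom Z (R.obj (H.obj c))) = _
  have e0 : D.hom Z (R.obj (H.obj c)) =
      Q.cast (L.ext Z) (R.ext (H.obj c)).symm (E.hom (L.obj Z) (H.obj c)) := by
    have h := (adj.hom_eq Z (H.obj c)).symm
    rw [Quantaloid.cast_eq_iff] at h
    rw [h, Quantaloid.cast_cast]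
  rw [e0, Quantaloid.cast_cast]
  show _ = Q.cast (L.ext Z) rfl (Q.cast rfl (H.ext c) (E.hom (L.obj Z) (H.obj c)))
  rw [Quantaloid.cast_cast]

/-- Left adjoints preserve weighted colimits. -/
theorem QAdj.colim (adj : QAdj L R) {K : QFun A D} {T : Q.Obj} {σ : Sink A T} {d : D.Obj}
    (hd : IsColim K σ d) : IsColim (QFun.comp L K) σ (L.obj d) := by
  refine ⟨(L.ext d).trans hd.ext, fun Z => ?_⟩
  have e1 : Q.cast ((L.ext d).trans hd.ext) rfl (E.hom (L.obj d) Z) =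
      Q.cast hd.ext rfl (Q.cast (L.ext d) rfl (E.hom (L.obj d) Z)) := by
    rw [Quantaloid.cast_cast]
  rw [e1, adj.hom_eq d Z]
  have e2 : Q.cast hd.ext rfl (Q.cast rfl (R.ext Z) (D.hom d (R.obj Z))) =
      Q.cast rfl (R.ext Z) (Q.cast hd.ext rfl (D.hom d (R.obj Z))) := by
    rw [Quantaloid.cast_cast, Quantaloid.cast_cast]
  rw [e2, hd.hom (R.obj Z)]
  show Q.cast rfl (R.ext Z)
      (⨅ a : A.Obj, Q.lda (K.graph a (R.obj Z)) (σ a PUnit.unit)) = _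
  rw [Quantaloid.cast_iInf]
  refine iInf_congr fun a => ?_
  rw [adj.graph_comp K a Z, Quantaloid.cast_lda rfl rfl (R.ext Z)]
  rfl

/-- Right adjoints preserve weighted limits. -/
theorem QAdj.lim (adj : QAdj L R) {H : QFun C E} {T : Q.Obj} {τ : Source C T} {e : E.Obj}
    (he : IsLim H τ e) : IsLim (QFun.comp R H) τ (R.obj e) := by
  refine ⟨(R.ext e).trans he.ext, fun Z => ?_⟩
  have e0 : D.hom Z (R.obj e) =
      Q.cast (L.ext Z) (R.ext e).symm (E.hom (L.obj Z) e) := by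
    have h := (adj.hom_eq Z e).symm
    rw [Quantaloid.cast_eq_iff] at h
    rw [h, Quantaloid.cast_cast]
  have e1 : Q.cast rfl ((R.ext e).trans he.ext) (D.hom Z (R.obj e)) =
      Q.cast (L.ext Z) rfl (Q.cast rfl he.ext (E.hom (L.obj Z) e)) := by
    rw [e0, Quantaloid.cast_cast, Quantaloid.cast_cast]
  rw [e1, he.hom (L.obj Z)]
  show Q.cast (L.ext Z) rfl
      (⨅ c : C.Obj, Q.rda (τ PUnit.unit c) (H.cograph (L.obj Z) c)) = _
  rw [Quantaloid.cast_iInf]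
  refine iInf_congr fun c => ?_
  rw [adj.cograph_comp H Z c, Quantaloid.cast_rda (L.ext Z) rfl rfl]
  rfl

/-- The unit of an adjunction: `d ≤ RLd`. -/
theorem QAdj.unit (adj : QAdj L R) (d : D.Obj) : D.le d (R.obj (L.obj d)) := by
  refine ⟨((R.ext (L.obj d)).trans (L.ext d)).symm, ?_⟩
  have h1 : Q.cast (L.ext d) rfl (Q.one (E.ext (L.obj d))) ≤
      Q.cast rfl (R.ext (L.obj d)) (D.hom d (R.obj (L.obj d))) := by
    rw [← adj.hom_eq d (L.obj d)]
    exact cast_mono _ _ (E.one_le (L.obj d))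
  rw [le_cast_iff] at h1
  refine le_trans (le_of_eq ?_) h1
  rw [← Quantaloid.cast_one (Q := Q) (L.ext d).symm, Quantaloid.cast_cast,
    Quantaloid.cast_cast]

/-- The counit of an adjunction: `LRe ≤ e`. -/
theorem QAdj.counit (adj : QAdj L R) (e : E.Obj) : E.le (L.obj (R.obj e)) e := by
  refine ⟨(L.ext (R.obj e)).trans (R.ext e), ?_⟩
  have h1 : Q.cast rfl (R.ext e) (Q.one (D.ext (R.obj e))) ≤
      Q.cast (L.ext (R.obj e)) rfl (E.hom (L.obj (R.obj e)) e) := by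
    rw [adj.hom_eq (R.obj e) e]
    exact cast_mono _ _ (D.one_le (R.obj e))
  rw [le_cast_iff] at h1
  refine le_trans (le_of_eq ?_) h1
  rw [← Quantaloid.cast_one (Q := Q) (L.ext (R.obj e)).symm, Quantaloid.cast_cast,
    Quantaloid.cast_cast]

end Adjunction

end ColimLemmas

section MoreLemmas

open Quantaloid

variable {Q : Quantaloid.{u}} {A C D E X Y : QCat Q}

theorem QFun.hom_comp_graph_le (F : QFun A X) (b : A.Obj) (x z : X.Obj) :
    Q.comp (X.hom x z) (F.graph b x) ≤ F.graph b z := by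
  show Q.comp (Q.cast rfl rfl (X.hom x z)) (Q.cast (F.ext b) rfl (X.hom (F.obj b) x)) ≤ _
  rw [Quantaloid.cast_comp_cast (F.ext b) rfl rfl]
  exact cast_mono _ _ (X.comp_le _ _ _)

theorem QFun.cograph_comp_hom_le (G : QFun C X) (c : C.Obj) (x z : X.Obj) :
    Q.comp (G.cograph x c) (X.hom z x) ≤ G.cograph z c := by
  show Q.comp (Q.cast rfl (G.ext c) (X.hom x (G.obj c))) (Q.cast rfl rfl (X.hom z x)) ≤ _
  rw [Quantaloid.cast_comp_cast rfl rfl (G.ext c)]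
  exact cast_mono _ _ (X.comp_le _ _ _)

theorem cograph_comp_graph_le (F : QFun A X) (G : QFun C X) (a : A.Obj) (c : C.Obj)
    (x : X.Obj) : Q.comp (G.cograph x c) (F.graph a x) ≤
      Q.cast (F.ext a) (G.ext c) (X.hom (F.obj a) (G.obj c)) := by
  show Q.comp (Q.cast rfl (G.ext c) (X.hom x (G.obj c)))
    (Q.cast (F.ext a) rfl (X.hom (F.obj a) x)) ≤ _
  rw [Quantaloid.cast_comp_cast (F.ext a) rfl (G.ext c)]
  exact cast_mono _ _ (X.comp_le _ _ _)

/-- Essentially surjective `Q`-functors are dense. -/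
theorem QFun.EssSurj.dense {F : QFun A X} (hF : F.EssSurj) : F.Dense := by
  intro x
  obtain ⟨a, hiso⟩ := hF x
  obtain ⟨he, -⟩ := hiso.1
  refine ⟨X.ext x, fun b _ => F.graph b x, rfl, fun z => ?_⟩
  show Q.cast rfl rfl (X.hom x z) = ⨅ b : A.Obj, Q.lda (F.graph b z) (F.graph b x)
  rw [Quantaloid.cast_rfl_rfl]
  refine le_antisymm (le_iInf fun b => Quantaloid.le_lda.mp (F.hom_comp_graph_le b x z)) ?_
  refine le_trans (iInf_le _ a) ?_
  have e1 : Q.lda (F.graph a z) (F.graph a x) =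
      Q.lda (X.hom (F.obj a) z) (X.hom (F.obj a) x) := by
    show Q.lda (Q.cast (F.ext a) rfl (X.hom (F.obj a) z))
      (Q.cast (F.ext a) rfl (X.hom (F.obj a) x)) = _
    rw [← Quantaloid.cast_lda (F.ext a) rfl rfl]
    rfl
  have e2 : X.hom (F.obj a) z = Q.cast he rfl (X.hom x z) :=
    (QCat.hom_congr_left hiso he z).symm
  have e3 : X.hom (F.obj a) x = Q.cast he rfl (X.hom x x) :=
    (QCat.hom_congr_left hiso he x).symm
  rw [e1, e2, e3, ← Quantaloid.cast_lda he rfl rfl, Quantaloid.cast_self]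
  exact le_trans (lda_anti (X.one_le x) _) (le_of_eq (lda_one _))

/-- Essentially surjective `Q`-functors are codense. -/
theorem QFun.EssSurj.codense {G : QFun C X} (hG : G.EssSurj) : G.Codense := by
  intro x
  obtain ⟨c, hiso⟩ := hG x
  obtain ⟨he, -⟩ := hiso.1
  refine ⟨X.ext x, fun _ c' => G.cograph x c', rfl, fun z => ?_⟩
  show Q.cast rfl rfl (X.hom z x) = ⨅ c' : C.Obj, Q.rda (G.cograph x c') (G.cograph z c')
  rw [Quantaloid.cast_rfl_rfl]
  refine le_antisymm
    (le_iInf fun c' => Quantaloid.le_rda.mp (G.cograph_comp_hom_le c' x z)) ?_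
  refine le_trans (iInf_le _ c) ?_
  have e1 : Q.rda (G.cograph x c) (G.cograph z c) =
      Q.rda (X.hom x (G.obj c)) (X.hom z (G.obj c)) := by
    show Q.rda (Q.cast rfl (G.ext c) (X.hom x (G.obj c)))
      (Q.cast rfl (G.ext c) (X.hom z (G.obj c))) = _
    rw [← Quantaloid.cast_rda rfl rfl (G.ext c)]
    rfl
  have e2 : X.hom x (G.obj c) = Q.cast rfl he (X.hom x x) :=
    (QCat.hom_congr_right hiso he).symm
  have e3 : X.hom z (G.obj c) = Q.cast rfl he (X.hom z x) :=
    (QCat.hom_congr_right hiso he).symm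
  rw [e1, e2, e3, ← Quantaloid.cast_rda rfl rfl he, Quantaloid.cast_self]
  exact le_trans (rda_anti (X.one_le x) _) (le_of_eq (rda_one _))

/-- An equivalence of `Q`-categories is fully faithful. -/
theorem equiv_hom_eq (F : QFun X Y) (G : QFun Y X)
    (hGF : ∀ x, X.iso (G.obj (F.obj x)) x) (u v : X.Obj) :
    Q.cast (F.ext u) (F.ext v) (Y.hom (F.obj u) (F.obj v)) = X.hom u v := by
  refine le_antisymm ?_ (F.hom_le u v)
  have h1 := G.hom_le (F.obj u) (F.obj v)
  obtain ⟨eu, -⟩ := (hGF u).1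
  obtain ⟨ev, -⟩ := (hGF v).1
  have a1 : Q.cast eu rfl (X.hom (G.obj (F.obj u)) (G.obj (F.obj v))) =
      X.hom u (G.obj (F.obj v)) := QCat.hom_congr_left (hGF u) eu (G.obj (F.obj v))
  have a2 : Q.cast rfl ev (X.hom u (G.obj (F.obj v))) = X.hom u v :=
    QCat.hom_congr_right (hGF v) ev
  have h2 : Q.cast eu ev (X.hom (G.obj (F.obj u)) (G.obj (F.obj v))) = X.hom u v := by
    rw [← a2, ← a1, Quantaloid.cast_cast]
  rw [cast_le_iff]
  refine le_trans h1 (le_of_eq ?_)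
  rw [Quantaloid.cast_eq_iff] at h2
  rw [h2, Quantaloid.cast_cast]

/-- `D(RLd, Re) = E(Ld, e)` for an adjunction `L ⊣ R`. -/
theorem adj_hom_RR {L : QFun D E} {R : QFun E D} (adj : QAdj L R) (d : D.Obj) (e : E.Obj) :
    Q.cast (R.ext (L.obj d)).symm (R.ext e).symm (E.hom (L.obj d) e) =
      D.hom (R.obj (L.obj d)) (R.obj e) := by
  refine le_antisymm ?_ ?_
  · have := R.hom_le (L.obj d) e
    rwa [le_cast_iff] at this
  · have hu : D.ext d = D.ext (R.obj (L.obj d)) :=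
      ((R.ext (L.obj d)).trans (L.ext d)).symm
    have h1 : Q.comp (D.hom (R.obj (L.obj d)) (R.obj e))
        (Q.cast rfl hu (Q.one (D.ext d))) ≤ D.hom d (R.obj e) :=
      le_trans (comp_mono_right _ (QCat.le_one_le (adj.unit d) hu))
        (D.comp_le d (R.obj (L.obj d)) (R.obj e))
    rw [comp_cast_one] at h1
    have h2 : D.hom d (R.obj e) = Q.cast (L.ext d) (R.ext e).symm (E.hom (L.obj d) e) := by
      have h := (adj.hom_eq d e).symm
      rw [Quantaloid.cast_eq_iff] at h
      rw [h, Quantaloid.cast_cast]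
    rw [h2] at h1
    have h3 := cast_mono hu rfl h1
    rw [Quantaloid.cast_cast, Quantaloid.cast_self, Quantaloid.cast_cast] at h3
    exact h3

end MoreLemmas

/-- Theorem 7.5 / [Lai–Shen]: for an adjunction `L ⊣ R` between total
`Q`-categories `D` and `E`, a total `Q`-category `X` is equivalent to `Fix(RL)` if and
only if there exist dense `Q`-functors `F : A → X`, `K : A → D` and codense
`Q`-functors `G : C → X`, `H : C → E` with `E(LKa,Hc) = X(Fa,Gc)` for all objects
`a` of `A` and `c` of `C`. -/
theorem fix_representation_dense {Q : Quantaloid.{u}} {D E : QCat Q}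
    (hD : D.Total) (hE : E.Total) (L : QFun D E) (R : QFun E D) (adj : QAdj L R)
    (X : QCat Q) (hX : X.Total) :
    QEquiv X (QCat.fix D (QFun.comp R L)) ↔
      ∃ (A C : QCat Q) (F : QFun A X) (K : QFun A D) (G : QFun C X) (H : QFun C E),
        F.Dense ∧ K.Dense ∧ G.Codense ∧ H.Codense ∧
        ∀ (a : A.Obj) (c : C.Obj),
          Q.cast ((L.ext (K.obj a)).trans (K.ext a)) (H.ext c)
              (E.hom (L.obj (K.obj a)) (H.obj c)) =
            Q.cast (F.ext a) (G.ext c) (X.hom (F.obj a) (G.obj c)) := by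
  constructor
  · rintro ⟨Φ, Ψ, h1, h2⟩
    have fixRL : ∀ d : D.Obj,
        D.iso ((QFun.comp R L).obj (R.obj (L.obj d))) (R.obj (L.obj d)) :=
      fun d => ⟨R.le_map (adj.counit (L.obj d)), adj.unit (R.obj (L.obj d))⟩
    let ρ : QFun D (QCat.fix D (QFun.comp R L)) :=
      { obj := fun d => ⟨R.obj (L.obj d), fixRL d⟩
        ext := fun d => (R.ext (L.obj d)).trans (L.ext d)
        hom_le := fun d d' => (QFun.comp R L).hom_le d d' }
    let ρ' : QFun E (QCat.fix D (QFun.comp R L)) :=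
      { obj := fun e => ⟨R.obj e, ⟨R.le_map (adj.counit e), adj.unit (R.obj e)⟩⟩
        ext := R.ext
        hom_le := R.hom_le }
    have hEssF : (QFun.comp Ψ ρ).EssSurj := by
      intro x
      refine ⟨(Φ.obj x).1, ?_⟩
      have hfix : (QCat.fix D (QFun.comp R L)).iso (Φ.obj x) (ρ.obj (Φ.obj x).1) :=
        QCat.iso_symm (Φ.obj x).2
      exact QCat.iso_trans (QCat.iso_symm (h1 x)) (Ψ.iso_map hfix)
    have hEssG : (QFun.comp Ψ ρ').EssSurj := by
      intro x
      refine ⟨L.obj (Φ.obj x).1, ?_⟩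
      have hfix : (QCat.fix D (QFun.comp R L)).iso (Φ.obj x)
          (ρ'.obj (L.obj (Φ.obj x).1)) := QCat.iso_symm (Φ.obj x).2
      exact QCat.iso_trans (QCat.iso_symm (h1 x)) (Ψ.iso_map hfix)
    have hIdD : (QFun.id D).EssSurj := fun d => ⟨d, QCat.iso_refl D d⟩
    have hIdE : (QFun.id E).EssSurj := fun e => ⟨e, QCat.iso_refl E e⟩
    refine ⟨D, E, QFun.comp Ψ ρ, QFun.id D, QFun.comp Ψ ρ', QFun.id E,
      hEssF.dense, hIdD.dense, hEssG.codense, hIdE.codense, fun d e => ?_⟩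
    have key := equiv_hom_eq Ψ Φ h2 (ρ.obj d) (ρ'.obj e)
    rw [Quantaloid.cast_eq_iff] at key
    have adjRR := adj_hom_RR adj d e
    rw [Quantaloid.cast_eq_iff] at adjRR
    show Q.cast _ _ (E.hom (L.obj d) e) = Q.cast _ _ (X.hom (Ψ.obj (ρ.obj d)) (Ψ.obj (ρ'.obj e)))
    rw [key, adjRR]
    show Q.cast _ _ (Q.cast _ _ ((QCat.fix D (QFun.comp R L)).hom (ρ.obj d) (ρ'.obj e))) =
      Q.cast _ _ (Q.cast _ _ ((QCat.fix D (QFun.comp R L)).hom (ρ.obj d) (ρ'.obj e)))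
    erw [Quantaloid.cast_cast, Quantaloid.cast_cast]
  · rintro ⟨A, C, F, K, G, H, hF, hK, hG, hH, HC⟩
    -- reformulation of the compatibility condition
    have HC' : ∀ (a : A.Obj) (c : C.Obj),
        Q.cast rfl (H.ext c) ((QFun.comp L K).graph a (H.obj c)) =
          Q.cast rfl (G.ext c) (F.graph a (G.obj c)) := by
      intro a c
      have l : Q.cast rfl (H.ext c) ((QFun.comp L K).graph a (H.obj c)) =
          Q.cast ((L.ext (K.obj a)).trans (K.ext a)) (H.ext c)
            (E.hom (L.obj (K.obj a)) (H.obj c)) := by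
        show Q.cast rfl (H.ext c) (Q.cast ((L.ext (K.obj a)).trans (K.ext a)) rfl _) = _
        erw [Quantaloid.cast_cast]
        rfl
      have r : Q.cast rfl (G.ext c) (F.graph a (G.obj c)) =
          Q.cast (F.ext a) (G.ext c) (X.hom (F.obj a) (G.obj c)) := by
        show Q.cast rfl (G.ext c) (Q.cast (F.ext a) rfl _) = _
        rw [Quantaloid.cast_cast]
      rw [l, r]
      exact HC a c
    -- choose the required colimits
    choose d₁ hd₁ using fun x : X.Obj =>
      total_colim hD K (fun a (_ : PUnit) => F.graph a x)
    choose ψ hψ using fun w : D.Obj =>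
      total_colim hX F (fun a (_ : PUnit) => K.graph a w)
    have canF := hF.canonical
    have canG := hG.canonical
    have canK := hK.canonical
    have canH := hH.canonical
    -- (L2) `E(L d₁x, Hc) = X(x, Gc)`
    have L2 : ∀ (x : X.Obj) (c : C.Obj) (he : E.ext (L.obj (d₁ x)) = X.ext x),
        Q.cast he (H.ext c) (E.hom (L.obj (d₁ x)) (H.obj c)) =
          Q.cast rfl (G.ext c) (X.hom x (G.obj c)) := by
      intro x c he
      have hcol := adj.colim (hd₁ x)
      have h0 : Q.cast hcol.ext rfl (E.hom (L.obj (d₁ x)) (H.obj c)) =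
          ⨅ a : A.Obj, Q.lda ((QFun.comp L K).graph a (H.obj c)) (F.graph a x) :=
        hcol.hom (H.obj c)
      have h0' := congrArg (Q.cast rfl (H.ext c)) h0
      rw [Quantaloid.cast_cast, Quantaloid.cast_iInf] at h0'
      have ce : ∀ a : A.Obj,
          Q.cast rfl (H.ext c)
              (Q.lda ((QFun.comp L K).graph a (H.obj c)) (F.graph a x)) =
            Q.lda (Q.cast rfl (G.ext c) (F.graph a (G.obj c))) (F.graph a x) := by
        intro a
        rw [Quantaloid.cast_lda rfl rfl (H.ext c), HC' a c]
        rfl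
      rw [iInf_congr ce] at h0'
      have h1 : Q.cast (canF x).ext rfl (X.hom x (G.obj c)) =
          ⨅ a : A.Obj, Q.lda (F.graph a (G.obj c)) (F.graph a x) :=
        (canF x).hom (G.obj c)
      have h1' := congrArg (Q.cast rfl (G.ext c)) h1
      rw [Quantaloid.cast_cast, Quantaloid.cast_iInf] at h1'
      have ce2 : ∀ a : A.Obj,
          Q.cast rfl (G.ext c) (Q.lda (F.graph a (G.obj c)) (F.graph a x)) =
            Q.lda (Q.cast rfl (G.ext c) (F.graph a (G.obj c))) (F.graph a x) := by
        intro a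
        rw [Quantaloid.cast_lda rfl rfl (G.ext c)]
        rfl
      rw [iInf_congr ce2] at h1'
      rw [← h1'] at h0'
      exact h0'
    -- (L3) `L d₁x` is the limit of `H` weighted by `X(x, G−)`
    have L3 : ∀ x : X.Obj,
        IsLim H (fun (_ : PUnit) c => G.cograph x c) (L.obj (d₁ x)) := by
      intro x
      have he : E.ext (L.obj (d₁ x)) = X.ext x := (L.ext (d₁ x)).trans (hd₁ x).ext
      refine ⟨he, fun z => ?_⟩
      show Q.cast rfl he (E.hom z (L.obj (d₁ x))) =
        ⨅ c : C.Obj, Q.rda (G.cograph x c) (H.cograph z c)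
      refine le_antisymm (le_iInf fun c => Quantaloid.le_rda.mp ?_) ?_
      · have e1 : G.cograph x c =
            Q.cast he (H.ext c) (E.hom (L.obj (d₁ x)) (H.obj c)) := (L2 x c he).symm
        rw [e1, Quantaloid.cast_comp_cast rfl he (H.ext c)]
        exact Quantaloid.cast_mono _ _ (E.comp_le _ _ _)
      · have h2 : Q.cast rfl (canH (L.obj (d₁ x))).ext (E.hom z (L.obj (d₁ x))) =
            ⨅ c : C.Obj, Q.rda (H.cograph (L.obj (d₁ x)) c) (H.cograph z c) :=
          (canH (L.obj (d₁ x))).hom z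
        have h2' := congrArg (Q.cast rfl he) h2
        rw [Quantaloid.cast_cast, Quantaloid.cast_iInf] at h2'
        refine le_trans (le_iInf fun c => le_trans (iInf_le _ c) ?_) (le_of_eq h2'.symm)
        have e2 : Q.cast he rfl (H.cograph (L.obj (d₁ x)) c) = G.cograph x c := by
          show Q.cast he rfl
            (Q.cast rfl (H.ext c) (E.hom (L.obj (d₁ x)) (H.obj c))) = _
          rw [Quantaloid.cast_cast]
          exact L2 x c he
        rw [Quantaloid.cast_rda rfl he rfl, e2]
        exact le_rfl
    -- (L5) `D(Ka, RL d₁x) = X(Fa, x)`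
    have L5 : ∀ (x : X.Obj) (a : A.Obj)
        (hr : D.ext (R.obj (L.obj (d₁ x))) = X.ext x),
        Q.cast (K.ext a) hr (D.hom (K.obj a) (R.obj (L.obj (d₁ x)))) = F.graph a x := by
      intro x a hr
      have hlim := adj.lim (L3 x)
      have h0 : Q.cast rfl hlim.ext (D.hom (K.obj a) (R.obj (L.obj (d₁ x)))) =
          ⨅ c : C.Obj, Q.rda (G.cograph x c)
            ((QFun.comp R H).cograph (K.obj a) c) := hlim.hom (K.obj a)
      have h0' := congrArg (Q.cast (K.ext a) rfl) h0
      rw [Quantaloid.cast_cast, Quantaloid.cast_iInf] at h0'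
      have ce : ∀ c : C.Obj,
          Q.cast (K.ext a) rfl (Q.rda (G.cograph x c)
              ((QFun.comp R H).cograph (K.obj a) c)) =
            Q.rda (G.cograph x c) (Q.cast rfl (G.ext c) (F.graph a (G.obj c))) := by
        intro c
        rw [Quantaloid.cast_rda (K.ext a) rfl rfl]
        have e3 : Q.cast (K.ext a) rfl ((QFun.comp R H).cograph (K.obj a) c) =
            Q.cast rfl (G.ext c) (F.graph a (G.obj c)) := by
          rw [adj.cograph_comp H (K.obj a) c, Quantaloid.cast_cast]
          show Q.cast ((L.ext (K.obj a)).trans (K.ext a)) rfl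
            (Q.cast rfl (H.ext c) (E.hom (L.obj (K.obj a)) (H.obj c))) = _
          rw [Quantaloid.cast_cast, ← HC' a c]
          show _ = Q.cast rfl (H.ext c) (Q.cast ((L.ext (K.obj a)).trans (K.ext a)) rfl
            (E.hom (L.obj (K.obj a)) (H.obj c)))
          rw [Quantaloid.cast_cast]
        rw [e3]
        rfl
      rw [iInf_congr ce] at h0'
      have h1 : Q.cast rfl (canG x).ext (X.hom (F.obj a) x) =
          ⨅ c : C.Obj, Q.rda (G.cograph x c) (G.cograph (F.obj a) c) :=
        (canG x).hom (F.obj a)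
      have h1' := congrArg (Q.cast (F.ext a) rfl) h1
      rw [Quantaloid.cast_cast, Quantaloid.cast_iInf] at h1'
      have ce2 : ∀ c : C.Obj,
          Q.cast (F.ext a) rfl (Q.rda (G.cograph x c) (G.cograph (F.obj a) c)) =
            Q.rda (G.cograph x c) (Q.cast rfl (G.ext c) (F.graph a (G.obj c))) := by
        intro c
        rw [Quantaloid.cast_rda (F.ext a) rfl rfl]
        have e4 : Q.cast (F.ext a) rfl (G.cograph (F.obj a) c) =
            Q.cast rfl (G.ext c) (F.graph a (G.obj c)) := by
          show Q.cast (F.ext a) rfl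
              (Q.cast rfl (G.ext c) (X.hom (F.obj a) (G.obj c))) =
            Q.cast rfl (G.ext c) (Q.cast (F.ext a) rfl (X.hom (F.obj a) (G.obj c)))
          rw [Quantaloid.cast_cast, Quantaloid.cast_cast]
        rw [e4]
        rfl
      rw [iInf_congr ce2] at h1'
      rw [← h1'] at h0'
      exact h0'
    -- (L6) `d₁ x` is a fixed point of `RL`
    have L6 : ∀ x : X.Obj, D.iso ((QFun.comp R L).obj (d₁ x)) (d₁ x) := by
      intro x
      show D.iso (R.obj (L.obj (d₁ x))) (d₁ x)
      refine ⟨⟨(R.ext (L.obj (d₁ x))).trans (L.ext (d₁ x)), ?_⟩, adj.unit (d₁ x)⟩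
      set h' := (R.ext (L.obj (d₁ x))).trans (L.ext (d₁ x)) with hh'
      have h0 : Q.cast (canK (R.obj (L.obj (d₁ x)))).ext rfl
          (D.hom (R.obj (L.obj (d₁ x))) (d₁ x)) =
          ⨅ a : A.Obj, Q.lda (K.graph a (d₁ x))
            (K.graph a (R.obj (L.obj (d₁ x)))) := (canK _).hom (d₁ x)
      refine (Quantaloid.cast_le_cast_iff (canK (R.obj (L.obj (d₁ x)))).ext
        (rfl : D.ext (d₁ x) = D.ext (d₁ x))).mp ?_
      rw [h0]
      refine le_iInf fun a => Quantaloid.le_lda.mp ?_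
      have e1 : Q.cast (canK (R.obj (L.obj (d₁ x)))).ext rfl
          (Q.cast rfl h' (Q.one (D.ext (R.obj (L.obj (d₁ x)))))) =
          Q.cast h'.symm rfl (Q.one (D.ext (d₁ x))) := by
        rw [Quantaloid.cast_cast, ← Quantaloid.cast_one (Q := Q) h', Quantaloid.cast_cast]
      rw [e1, Quantaloid.cast_one_comp]
      have hr : D.ext (R.obj (L.obj (d₁ x))) = X.ext x := h'.trans (hd₁ x).ext
      have e5 : Q.cast rfl hr (K.graph a (R.obj (L.obj (d₁ x)))) = F.graph a x := by
        show Q.cast rfl hr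
          (Q.cast (K.ext a) rfl (D.hom (K.obj a) (R.obj (L.obj (d₁ x))))) = _
        rw [Quantaloid.cast_cast]
        exact L5 x a hr
      have h6 := le_trans (le_of_eq e5) ((hd₁ x).unit a)
      rw [Quantaloid.le_cast_iff, Quantaloid.cast_cast] at h6
      exact h6
    -- the comparison functor `Φ : X → Fix(RL)`
    have Φhom : ∀ x y : X.Obj, X.hom x y ≤
        Q.cast (hd₁ x).ext (hd₁ y).ext (D.hom (d₁ x) (d₁ y)) := by
      intro x y
      have h0 : Q.cast (hd₁ x).ext rfl (D.hom (d₁ x) (d₁ y)) =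
          ⨅ a : A.Obj, Q.lda (K.graph a (d₁ y)) (F.graph a x) := (hd₁ x).hom (d₁ y)
      have s1 : Q.cast rfl (hd₁ y).ext.symm (X.hom x y) ≤
          ⨅ a : A.Obj, Q.lda (K.graph a (d₁ y)) (F.graph a x) := by
        refine le_iInf fun a => Quantaloid.le_lda.mp ?_
        have e1 : Q.comp (Q.cast rfl (hd₁ y).ext.symm (X.hom x y)) (F.graph a x) =
            Q.cast rfl (hd₁ y).ext.symm (Q.comp (X.hom x y) (F.graph a x)) := by
          show Q.comp (Q.cast rfl (hd₁ y).ext.symm (X.hom x y))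
            (Q.cast rfl rfl (F.graph a x)) = _
          rw [Quantaloid.cast_comp_cast rfl rfl (hd₁ y).ext.symm]
        rw [e1]
        have h2 := le_trans (F.hom_comp_graph_le a x y) ((hd₁ y).unit a)
        have h3 := Quantaloid.cast_mono rfl (hd₁ y).ext.symm h2
        rw [Quantaloid.cast_cast, Quantaloid.cast_self] at h3
        exact le_trans (Quantaloid.cast_mono rfl (hd₁ y).ext.symm
          (Quantaloid.comp_mono_left le_rfl _)) h3
      rw [← h0] at s1
      have s2 := Quantaloid.cast_mono rfl (hd₁ y).ext s1
      rw [Quantaloid.cast_cast, Quantaloid.cast_self, Quantaloid.cast_cast] at s2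
      exact s2
    -- the comparison functor `Ψ : Fix(RL) → X`
    have Ψhom : ∀ w w' : D.Obj, D.hom w w' ≤
        Q.cast (hψ w).ext (hψ w').ext (X.hom (ψ w) (ψ w')) := by
      intro w w'
      have h0 : Q.cast (hψ w).ext rfl (X.hom (ψ w) (ψ w')) =
          ⨅ a : A.Obj, Q.lda (F.graph a (ψ w')) (K.graph a w) := (hψ w).hom (ψ w')
      have s1 : Q.cast rfl (hψ w').ext.symm (D.hom w w') ≤
          ⨅ a : A.Obj, Q.lda (F.graph a (ψ w')) (K.graph a w) := by
        refine le_iInf fun a => Quantaloid.le_lda.mp ?_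
        have e1 : Q.comp (Q.cast rfl (hψ w').ext.symm (D.hom w w')) (K.graph a w) =
            Q.cast rfl (hψ w').ext.symm (Q.comp (D.hom w w') (K.graph a w)) := by
          show Q.comp (Q.cast rfl (hψ w').ext.symm (D.hom w w'))
            (Q.cast rfl rfl (K.graph a w)) = _
          rw [Quantaloid.cast_comp_cast rfl rfl (hψ w').ext.symm]
        rw [e1]
        have h2 := le_trans (K.hom_comp_graph_le a w w') ((hψ w').unit a)
        have h3 := Quantaloid.cast_mono rfl (hψ w').ext.symm h2
        rw [Quantaloid.cast_cast, Quantaloid.cast_self] at h3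
        exact h3
      rw [← h0] at s1
      have s2 := Quantaloid.cast_mono rfl (hψ w').ext s1
      rw [Quantaloid.cast_cast, Quantaloid.cast_self, Quantaloid.cast_cast] at s2
      exact s2
    -- (L7) `K(a, d₁x) = F(a, x)` as weights
    have L7 : ∀ (x : X.Obj) (a : A.Obj),
        Q.cast rfl (hd₁ x).ext (K.graph a (d₁ x)) = F.graph a x := by
      intro x a
      have h'' : D.ext (d₁ x) = D.ext (R.obj (L.obj (d₁ x))) :=
        ((R.ext (L.obj (d₁ x))).trans (L.ext (d₁ x))).symm
      have hr : D.ext (R.obj (L.obj (d₁ x))) = X.ext x := h''.symm.trans (hd₁ x).ext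
      have e6 : Q.cast rfl (hd₁ x).ext (K.graph a (d₁ x)) =
          Q.cast (K.ext a) hr (D.hom (K.obj a) (R.obj (L.obj (d₁ x)))) := by
        show Q.cast rfl (hd₁ x).ext
          (Q.cast (K.ext a) rfl (D.hom (K.obj a) (d₁ x))) = _
        rw [Quantaloid.cast_cast,
          ← QCat.hom_congr_right (Z := K.obj a)
            (QCat.iso_symm (L6 x) : D.iso (d₁ x) (R.obj (L.obj (d₁ x)))) h'',
          Quantaloid.cast_cast]
      rw [e6]
      exact L5 x a hr
    -- (EQ1) `Ψ (Φ x) ≅ x`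
    have EQ1 : ∀ x : X.Obj, X.iso (ψ (d₁ x)) x :=
      fun x => colim_unique (hψ (d₁ x)) (canF x) (hd₁ x).ext (fun a => L7 x a)
    -- (L10) `E(Lw, Hc) = X(ψw, Gc)`
    have L10 : ∀ (w : D.Obj) (c : C.Obj) (hLw : E.ext (L.obj w) = X.ext (ψ w)),
        Q.cast hLw (H.ext c) (E.hom (L.obj w) (H.obj c)) =
          Q.cast rfl (G.ext c) (X.hom (ψ w) (G.obj c)) := by
      intro w c hLw
      have hcol := adj.colim (canK w)
      have h0 : Q.cast hcol.ext rfl (E.hom (L.obj w) (H.obj c)) =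
          ⨅ a : A.Obj, Q.lda ((QFun.comp L K).graph a (H.obj c)) (K.graph a w) :=
        hcol.hom (H.obj c)
      have h0' := congrArg (Q.cast rfl (H.ext c)) h0
      rw [Quantaloid.cast_cast, Quantaloid.cast_iInf] at h0'
      have ce : ∀ a : A.Obj,
          Q.cast rfl (H.ext c)
              (Q.lda ((QFun.comp L K).graph a (H.obj c)) (K.graph a w)) =
            Q.lda (Q.cast rfl (G.ext c) (F.graph a (G.obj c))) (K.graph a w) := by
        intro a
        rw [Quantaloid.cast_lda rfl rfl (H.ext c), HC' a c]
        rfl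
      rw [iInf_congr ce] at h0'
      have h1 : Q.cast (hψ w).ext rfl (X.hom (ψ w) (G.obj c)) =
          ⨅ a : A.Obj, Q.lda (F.graph a (G.obj c)) (K.graph a w) :=
        (hψ w).hom (G.obj c)
      have h1' := congrArg (Q.cast rfl (G.ext c)) h1
      rw [Quantaloid.cast_cast, Quantaloid.cast_iInf] at h1'
      have ce2 : ∀ a : A.Obj,
          Q.cast rfl (G.ext c) (Q.lda (F.graph a (G.obj c)) (K.graph a w)) =
            Q.lda (Q.cast rfl (G.ext c) (F.graph a (G.obj c))) (K.graph a w) := by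
        intro a
        rw [Quantaloid.cast_lda rfl rfl (G.ext c)]
        rfl
      rw [iInf_congr ce2] at h1'
      rw [← h1'] at h0'
      have h0'' := congrArg (Q.cast (hψ w).ext.symm (rfl : C.ext c = C.ext c)) h0'
      rw [Quantaloid.cast_cast, Quantaloid.cast_cast] at h0''
      exact h0''
    -- (L11) `ψ w` is the limit of `G` weighted by `E(Lw, H−)`
    have L11 : ∀ w : D.Obj,
        IsLim G (fun (_ : PUnit) c =>
          Q.cast ((L.ext w).trans (hψ w).ext.symm) (H.ext c)
            (E.hom (L.obj w) (H.obj c))) (ψ w) := by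
      intro w
      refine ⟨rfl, fun z => ?_⟩
      show Q.cast rfl rfl (X.hom z (ψ w)) = ⨅ c : C.Obj,
        Q.rda (Q.cast ((L.ext w).trans (hψ w).ext.symm) (H.ext c)
          (E.hom (L.obj w) (H.obj c))) (G.cograph z c)
      rw [Quantaloid.cast_rfl_rfl]
      have ce : ∀ c : C.Obj,
          Q.cast ((L.ext w).trans (hψ w).ext.symm) (H.ext c)
              (E.hom (L.obj w) (H.obj c)) = G.cograph (ψ w) c :=
        fun c => L10 w c ((L.ext w).trans (hψ w).ext.symm)
      have step : (⨅ c : C.Obj,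
          Q.rda (Q.cast ((L.ext w).trans (hψ w).ext.symm) (H.ext c)
            (E.hom (L.obj w) (H.obj c))) (G.cograph z c)) =
          ⨅ c : C.Obj, Q.rda (G.cograph (ψ w) c) (G.cograph z c) :=
        iInf_congr fun c => by rw [ce c]
      rw [step]
      have h2 : Q.cast rfl (canG (ψ w)).ext (X.hom z (ψ w)) =
          ⨅ c : C.Obj, Q.rda (G.cograph (ψ w) c) (G.cograph z c) :=
        (canG (ψ w)).hom z
      rw [← h2]
      exact (Quantaloid.cast_self _ _ _).symm
    -- (L12) `X(Fa, ψw) = D(Ka, w)` for fixed points `w`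
    have L12 : ∀ (w : D.Obj), D.iso ((QFun.comp R L).obj w) w → ∀ a : A.Obj,
        Q.cast rfl (hψ w).ext (F.graph a (ψ w)) = K.graph a w := by
      intro w hw a
      have pE : E.ext (L.obj (K.obj a)) = X.ext (F.obj a) :=
        ((L.ext (K.obj a)).trans (K.ext a)).trans (F.ext a).symm
      have hLw : E.ext (L.obj w) = X.ext (ψ w) := (L.ext w).trans (hψ w).ext.symm
      have h0 : Q.cast rfl (L11 w).ext (X.hom (F.obj a) (ψ w)) =
          ⨅ c : C.Obj, Q.rda (Q.cast hLw (H.ext c) (E.hom (L.obj w) (H.obj c)))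
            (G.cograph (F.obj a) c) := (L11 w).hom (F.obj a)
      -- rewrite the cograph using the compatibility condition
      have e7 : ∀ c : C.Obj, G.cograph (F.obj a) c =
          Q.cast pE (H.ext c) (E.hom (L.obj (K.obj a)) (H.obj c)) := by
        intro c
        show Q.cast rfl (G.ext c) (X.hom (F.obj a) (G.obj c)) = _
        have t1 : Q.cast rfl (G.ext c) (X.hom (F.obj a) (G.obj c)) =
            Q.cast (F.ext a).symm rfl
              (Q.cast (F.ext a) (G.ext c) (X.hom (F.obj a) (G.obj c))) := by
          rw [Quantaloid.cast_cast]
        rw [t1, ← HC a c, Quantaloid.cast_cast]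
      have e8 : ∀ c : C.Obj,
          Q.rda (Q.cast hLw (H.ext c) (E.hom (L.obj w) (H.obj c)))
              (G.cograph (F.obj a) c) =
            Q.cast pE hLw (Q.rda (E.hom (L.obj w) (H.obj c))
              (E.hom (L.obj (K.obj a)) (H.obj c))) := by
        intro c
        rw [e7 c, Quantaloid.cast_rda pE hLw (H.ext c)]
      rw [iInf_congr e8, ← Quantaloid.cast_iInf] at h0
      -- use codensity of `H` at `Lw`
      have hB : (⨅ c : C.Obj, Q.rda (E.hom (L.obj w) (H.obj c))
          (E.hom (L.obj (K.obj a)) (H.obj c))) =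
          Q.cast rfl (canH (L.obj w)).ext (E.hom (L.obj (K.obj a)) (L.obj w)) := by
        have hB0 : Q.cast rfl (canH (L.obj w)).ext
            (E.hom (L.obj (K.obj a)) (L.obj w)) =
            ⨅ c : C.Obj, Q.rda (H.cograph (L.obj w) c)
              (H.cograph (L.obj (K.obj a)) c) := (canH (L.obj w)).hom (L.obj (K.obj a))
        rw [hB0]
        refine iInf_congr fun c => ?_
        show Q.rda (E.hom (L.obj w) (H.obj c)) (E.hom (L.obj (K.obj a)) (H.obj c)) =
          Q.rda (Q.cast rfl (H.ext c) (E.hom (L.obj w) (H.obj c)))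
            (Q.cast rfl (H.ext c) (E.hom (L.obj (K.obj a)) (H.obj c)))
        rw [← Quantaloid.cast_rda rfl rfl (H.ext c)]
        exact (Quantaloid.cast_rfl_rfl _).symm
      rw [hB] at h0
      -- adjunction and the fixed-point property of `w`
      have t2 : Q.cast (L.ext (K.obj a)) (L.ext w)
          (E.hom (L.obj (K.obj a)) (L.obj w)) = D.hom (K.obj a) w := by
        have hadj := adj.hom_eq (K.obj a) (L.obj w)
        have hcr := QCat.hom_congr_right (Z := K.obj a)
          (hw : D.iso (R.obj (L.obj w)) w) ((R.ext (L.obj w)).trans (L.ext w))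
        have u1 : Q.cast (L.ext (K.obj a)) (L.ext w)
            (E.hom (L.obj (K.obj a)) (L.obj w)) =
            Q.cast rfl (L.ext w)
              (Q.cast (L.ext (K.obj a)) rfl (E.hom (L.obj (K.obj a)) (L.obj w))) := by
          rw [Quantaloid.cast_cast]
        rw [u1, hadj, Quantaloid.cast_cast]
        exact hcr
      rw [Quantaloid.cast_eq_iff] at t2
      rw [t2, Quantaloid.cast_cast, Quantaloid.cast_cast] at h0
      -- h0 : cast _ _ (X.hom (Fa) (ψ w)) = cast _ _ (D.hom (Ka) w)
      have h0' := congrArg (Q.cast (F.ext a) (hψ w).ext) h0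
      rw [Quantaloid.cast_cast, Quantaloid.cast_cast] at h0'
      show Q.cast rfl (hψ w).ext (Q.cast (F.ext a) rfl (X.hom (F.obj a) (ψ w))) =
        Q.cast (K.ext a) rfl (D.hom (K.obj a) w)
      rw [Quantaloid.cast_cast]
      exact h0'
    -- (EQ2) `Φ (Ψ w) ≅ w` for fixed points
    have EQ2 : ∀ (w : D.Obj), D.iso ((QFun.comp R L).obj w) w →
        D.iso (d₁ (ψ w)) w := by
      intro w hw
      exact colim_unique (hd₁ (ψ w)) (canK w) (hψ w).ext (fun a => L12 w hw a)
    -- assemble the equivalence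
    refine ⟨{ obj := fun x => ⟨d₁ x, L6 x⟩, ext := fun x => (hd₁ x).ext,
              hom_le := fun x y => Φhom x y },
            { obj := fun w => ψ w.1, ext := fun w => (hψ w.1).ext,
              hom_le := fun w w' => Ψhom w.1 w'.1 },
            fun x => EQ1 x, fun w => EQ2 w.1 w.2⟩
end
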